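/- arXiv:1806.03985 — 4 statements merged into one kernel-verified Lean document; each statement's English description precedes it below -/
import Mathlib

section
/- For a positive definite N×N complex matrix X and s > 1, one has tr X^s = sup over positive semidefinite Y of ( s·tr(XY) − (s−1)·tr Y^{s/(s−1)} ). -/
open Matrix ComplexOrder

noncomputable def mpow {n : Type*} [Fintype n] [DecidableEq n]
    (A : Matrix n n ℂ) (p : ℝ) : Matrix n n ℂ :=
  cfc (fun x : ℝ => x ^ p) A

noncomputable def rtr {n : Type*} [Fintype n] (A : Matrix n n ℂ) : ℝ :=
  (Matrix.trace A).re

lemma mpow_eq {N : ℕ} (X : Matrix (Fin N) (Fin N) ℂ) (hX : X.IsHermitian) (p : ℝ) :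
    mpow X p = (Matrix.IsHermitian.eigenvectorUnitary hX : Matrix (Fin N) (Fin N) ℂ) *
      diagonal (RCLike.ofReal ∘ (fun i => hX.eigenvalues i ^ p)) *
      star (Matrix.IsHermitian.eigenvectorUnitary hX : Matrix (Fin N) (Fin N) ℂ) := by
  rw [mpow, Matrix.IsHermitian.cfc_eq, Matrix.IsHermitian.cfc]
  rfl

lemma rtr_unitary_diag {N : ℕ} (U : Matrix.unitaryGroup (Fin N) ℂ) (d : Fin N → ℝ) :
    rtr ((U : Matrix (Fin N) (Fin N) ℂ) * diagonal (RCLike.ofReal ∘ d) *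
      star (U : Matrix (Fin N) (Fin N) ℂ)) = ∑ i, d i := by
  rw [rtr, Matrix.trace_mul_cycle, Matrix.UnitaryGroup.star_mul_self, Matrix.one_mul,
    Matrix.trace_diagonal]
  simp [Complex.ofReal_re]

lemma rtr_mpow {N : ℕ} (X : Matrix (Fin N) (Fin N) ℂ) (hX : X.IsHermitian) (p : ℝ) :
    rtr (mpow X p) = ∑ i, hX.eigenvalues i ^ p := by
  rw [mpow_eq X hX p, rtr_unitary_diag]

-- key trace double-sum formula
lemma key_trace {N : ℕ} (U V : Matrix.unitaryGroup (Fin N) ℂ) (a b : Fin N → ℝ) :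
    rtr (((U : Matrix (Fin N) (Fin N) ℂ) * diagonal (RCLike.ofReal ∘ a) * star (U : Matrix (Fin N) (Fin N) ℂ)) *
        ((V : Matrix (Fin N) (Fin N) ℂ) * diagonal (RCLike.ofReal ∘ b) * star (V : Matrix (Fin N) (Fin N) ℂ))) =
    ∑ i, ∑ j, a i * b j *
      Complex.normSq ((star (U : Matrix (Fin N) (Fin N) ℂ) * (V : Matrix (Fin N) (Fin N) ℂ)) i j) := by
  set U' : Matrix (Fin N) (Fin N) ℂ := (U : Matrix (Fin N) (Fin N) ℂ) with hU'
  set V' : Matrix (Fin N) (Fin N) ℂ := (V : Matrix (Fin N) (Fin N) ℂ) with hV'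
  set W : Matrix (Fin N) (Fin N) ℂ := star U' * V' with hW
  have hUc : ∀ M : Matrix (Fin N) (Fin N) ℂ, U' * (star U' * M) = M := by
    intro M; rw [← Matrix.mul_assoc, (show U' * star U' = 1 from U.2.2), Matrix.one_mul]
  have hUs : ∀ M : Matrix (Fin N) (Fin N) ℂ, star U' * (U' * M) = M := by
    intro M; rw [← Matrix.mul_assoc, (show star U' * U' = 1 from U.2.1), Matrix.one_mul]
  have step1 : (U' * diagonal (RCLike.ofReal ∘ a) * star U') *
      (V' * diagonal (RCLike.ofReal ∘ b) * star V') =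
      U' * ((diagonal (RCLike.ofReal ∘ a) * W) * (diagonal (RCLike.ofReal ∘ b) * star W)) * star U' := by
    simp only [hW, Matrix.star_mul, star_star]
    simp only [Matrix.mul_assoc, hUc, hUs, (show U' * star U' = 1 from U.2.2), Matrix.mul_one]
  rw [step1, rtr, Matrix.trace_mul_cycle, ← Matrix.mul_assoc,
    (show star U' * U' = 1 from U.2.1), Matrix.one_mul]
  rw [Matrix.trace]
  rw [Complex.re_sum]
  refine Finset.sum_congr rfl fun i _ => ?_
  rw [Matrix.diag_apply, Matrix.mul_apply, Complex.re_sum]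
  refine Finset.sum_congr rfl fun j _ => ?_
  rw [Matrix.diagonal_mul, Matrix.diagonal_mul, Matrix.star_apply]
  simp only [Function.comp_apply, RCLike.ofReal, Complex.star_def]
  rw [mul_mul_mul_comm, Complex.mul_conj]
  norm_cast
  simp [RCLike.ofReal, Complex.mul_re]

lemma sum_normSq_row {N : ℕ} {W : Matrix (Fin N) (Fin N) ℂ} (h : W * star W = 1) (i : Fin N) :
    ∑ j, Complex.normSq (W i j) = 1 := by
  have h2 := congrArg (fun M : Matrix (Fin N) (Fin N) ℂ => (M i i).re) h
  simp only [Matrix.mul_apply, Matrix.conjTranspose_apply, Matrix.one_apply_eq,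
    Complex.one_re, Complex.re_sum] at h2
  rw [← h2]
  refine Finset.sum_congr rfl fun j _ => ?_
  rw [Matrix.star_apply, show W i j * star (W i j) = (Complex.normSq (W i j) : ℂ) by
    rw [Complex.star_def, Complex.mul_conj]]
  simp

lemma sum_normSq_col {N : ℕ} {W : Matrix (Fin N) (Fin N) ℂ} (h : star W * W = 1) (j : Fin N) :
    ∑ i, Complex.normSq (W i j) = 1 := by
  have h2 := congrArg (fun M : Matrix (Fin N) (Fin N) ℂ => (M j j).re) h
  simp only [Matrix.mul_apply, Matrix.conjTranspose_apply, Matrix.one_apply_eq,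
    Complex.one_re, Complex.re_sum] at h2
  rw [← h2]
  refine Finset.sum_congr rfl fun i _ => ?_
  rw [Matrix.star_apply, mul_comm, show W i j * star (W i j) = (Complex.normSq (W i j) : ℂ) by
    rw [Complex.star_def, Complex.mul_conj]]
  simp

lemma young' {s x y : ℝ} (hs : 1 < s) (hx : 0 ≤ x) (hy : 0 ≤ y) :
    s * (x * y) - (s - 1) * y ^ (s / (s - 1)) ≤ x ^ s := by
  have hpq : Real.HolderConjugate s (s / (s - 1)) := Real.HolderConjugate.conjExponent hs
  have h := Real.young_inequality_of_nonneg hx hy hpq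
  have hq : s / (s / (s - 1)) = s - 1 := hpq.div_conj_eq_sub_one
  have hspos : (0 : ℝ) < s := hpq.pos
  have hqpos : (0 : ℝ) < s / (s - 1) := hpq.symm.pos
  have h2 : s * (x * y) ≤ x ^ s + (s / (s / (s - 1))) * y ^ (s / (s - 1)) := by
    have := mul_le_mul_of_nonneg_left h hspos.le
    calc s * (x * y) ≤ s * (x ^ s / s + y ^ (s / (s - 1)) / (s / (s - 1))) := this
      _ = x ^ s + (s / (s / (s - 1))) * y ^ (s / (s - 1)) := by
          field_simp
  rw [hq] at h2
  linarith

lemma upper_bound {N : ℕ} (X : Matrix (Fin N) (Fin N) ℂ) (hX : X.PosDef) {s : ℝ}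
    (hs : 1 < s) (Y : Matrix (Fin N) (Fin N) ℂ) (hY : Y.PosSemidef) :
    s * rtr (X * Y) - (s - 1) * rtr (mpow Y (s / (s - 1))) ≤ rtr (mpow X s) := by
  set U := Matrix.IsHermitian.eigenvectorUnitary hX.1 with hU
  set V := Matrix.IsHermitian.eigenvectorUnitary hY.1 with hV
  set lam := hX.1.eigenvalues with hlam
  set mu := hY.1.eigenvalues with hmu
  set W : Matrix (Fin N) (Fin N) ℂ := star (U : Matrix (Fin N) (Fin N) ℂ) * (V : Matrix (Fin N) (Fin N) ℂ) with hW
  set w : Fin N → Fin N → ℝ := fun i j => Complex.normSq (W i j) with hw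
  have hWW : W * star W = 1 := by
    rw [hW, Matrix.star_mul, star_star, Matrix.mul_assoc, ← Matrix.mul_assoc (V : Matrix (Fin N) (Fin N) ℂ),
      (show (V : Matrix (Fin N) (Fin N) ℂ) * star (V : Matrix (Fin N) (Fin N) ℂ) = 1 from V.2.2),
      Matrix.one_mul, (show star (U : Matrix (Fin N) (Fin N) ℂ) * (U : Matrix (Fin N) (Fin N) ℂ) = 1 from U.2.1)]
  have hsWW : star W * W = 1 := by
    rw [hW, Matrix.star_mul, star_star, Matrix.mul_assoc, ← Matrix.mul_assoc (U : Matrix (Fin N) (Fin N) ℂ),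
      (show (U : Matrix (Fin N) (Fin N) ℂ) * star (U : Matrix (Fin N) (Fin N) ℂ) = 1 from U.2.2),
      Matrix.one_mul, (show star (V : Matrix (Fin N) (Fin N) ℂ) * (V : Matrix (Fin N) (Fin N) ℂ) = 1 from V.2.1)]
  have hrow : ∀ i, ∑ j, w i j = 1 := fun i => sum_normSq_row hWW i
  have hcol : ∀ j, ∑ i, w i j = 1 := fun j => sum_normSq_col hsWW j
  have hwnn : ∀ i j, 0 ≤ w i j := fun i j => Complex.normSq_nonneg _
  have hlamnn : ∀ i, 0 ≤ lam i := fun i => hX.posSemidef.eigenvalues_nonneg i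
  have hmunn : ∀ j, 0 ≤ mu j := fun j => hY.eigenvalues_nonneg j
  have htrXY : rtr (X * Y) = ∑ i, ∑ j, lam i * mu j * w i j := by
    conv_lhs => rw [hX.1.spectral_theorem, hY.1.spectral_theorem]
    exact key_trace U V lam mu
  have htrYq : rtr (mpow Y (s / (s - 1))) = ∑ i, ∑ j, w i j * mu j ^ (s / (s - 1)) := by
    rw [rtr_mpow Y hY.1, Finset.sum_comm]
    refine Finset.sum_congr rfl fun j _ => ?_
    rw [← Finset.sum_mul, hcol j, one_mul]
  have htrXs : rtr (mpow X s) = ∑ i, ∑ j, w i j * lam i ^ s := by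
    rw [rtr_mpow X hX.1]
    refine Finset.sum_congr rfl fun i _ => ?_
    rw [← Finset.sum_mul, hrow i, one_mul]
  rw [htrXY, htrYq, htrXs, Finset.mul_sum, Finset.mul_sum, ← Finset.sum_sub_distrib]
  refine Finset.sum_le_sum fun i _ => ?_
  rw [Finset.mul_sum, Finset.mul_sum, ← Finset.sum_sub_distrib]
  refine Finset.sum_le_sum fun j _ => ?_
  have hy := young' hs (hlamnn i) (hmunn j)
  calc s * (lam i * mu j * w i j) - (s - 1) * (w i j * mu j ^ (s / (s - 1)))
      = w i j * (s * (lam i * mu j) - (s - 1) * mu j ^ (s / (s - 1))) := by ring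
    _ ≤ w i j * lam i ^ s := mul_le_mul_of_nonneg_left hy (hwnn i j)

theorem trace_pow_variational_sup {N : ℕ} (X : Matrix (Fin N) (Fin N) ℂ)
    (hX : X.PosDef) (s : ℝ) (hs : 1 < s) :
    rtr (mpow X s) =
      sSup { r : ℝ | ∃ Y : Matrix (Fin N) (Fin N) ℂ, Y.PosSemidef ∧
        r = s * rtr (X * Y) - (s - 1) * rtr (mpow Y (s / (s - 1))) } := by
  have hs1 : s - 1 ≠ 0 := by linarith
  set U := Matrix.IsHermitian.eigenvectorUnitary hX.1 with hU
  set lam := hX.1.eigenvalues with hlam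
  set Y₀ := mpow X (s - 1) with hY₀
  have hY₀eq : Y₀ = (U : Matrix (Fin N) (Fin N) ℂ) *
      diagonal (RCLike.ofReal ∘ fun i => lam i ^ (s - 1)) *
      star (U : Matrix (Fin N) (Fin N) ℂ) := mpow_eq X hX.1 (s - 1)
  have hlampos : ∀ i, 0 < lam i := fun i => hX.eigenvalues_pos i
  have hY₀psd : Y₀.PosSemidef := by
    rw [hY₀eq, Matrix.star_eq_conjTranspose]
    refine Matrix.PosSemidef.mul_mul_conjTranspose_same ?_ _
    refine Matrix.posSemidef_diagonal_iff.mpr fun i => ?_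
    exact Complex.zero_le_real.mpr (Real.rpow_nonneg (hlampos i).le _)
  have hXY₀ : rtr (X * Y₀) = rtr (mpow X s) := by
    have hXs : X * Y₀ = (U : Matrix (Fin N) (Fin N) ℂ) *
        diagonal (RCLike.ofReal ∘ fun i => lam i ^ s) *
        star (U : Matrix (Fin N) (Fin N) ℂ) := by
      have hUs : ∀ M : Matrix (Fin N) (Fin N) ℂ,
          star (U : Matrix (Fin N) (Fin N) ℂ) * ((U : Matrix (Fin N) (Fin N) ℂ) * M) = M := by
        intro M
        rw [← Matrix.mul_assoc,
          (show star (U : Matrix (Fin N) (Fin N) ℂ) * (U : Matrix (Fin N) (Fin N) ℂ) = 1 from U.2.1),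
          Matrix.one_mul]
      conv_lhs => rw [show X = (U : Matrix (Fin N) (Fin N) ℂ) * diagonal (RCLike.ofReal ∘ hX.1.eigenvalues) *
        star (U : Matrix (Fin N) (Fin N) ℂ) from hX.1.spectral_theorem, hY₀eq]
      simp only [Matrix.mul_assoc, hUs]
      rw [← Matrix.mul_assoc (diagonal (RCLike.ofReal ∘ hX.1.eigenvalues)),
        Matrix.diagonal_mul_diagonal]
      refine congrArg (fun M : Matrix (Fin N) (Fin N) ℂ =>
        (U : Matrix (Fin N) (Fin N) ℂ) * (M * star (U : Matrix (Fin N) (Fin N) ℂ))) ?_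
      refine congrArg Matrix.diagonal ?_
      funext i
      simp only [Pi.mul_apply, Function.comp_apply]
      rw [← RCLike.ofReal_mul]
      congr 1
      conv_rhs => rw [show s = 1 + (s - 1) by ring, Real.rpow_add (hlampos i), Real.rpow_one]
    rw [hXs, mpow_eq X hX.1 s]
  have hY₀pow : mpow Y₀ (s / (s - 1)) = mpow X s := by
    rw [hY₀, mpow, mpow, mpow]
    rw [← cfc_comp (fun x : ℝ => x ^ (s / (s - 1))) (fun x : ℝ => x ^ (s - 1)) X
      hX.1.isSelfAdjoint
      ((Real.continuous_rpow_const (div_nonneg (by linarith) (by linarith))).continuousOn)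
      ((Real.continuous_rpow_const (by linarith)).continuousOn)]
    refine cfc_congr fun x hx => ?_
    have hxpos : 0 < x := by
      rw [hX.1.spectrum_real_eq_range_eigenvalues] at hx
      obtain ⟨i, rfl⟩ := hx
      exact hlampos i
    simp only [Function.comp_apply]
    rw [← Real.rpow_mul hxpos.le]
    congr 1
    field_simp
  set t := rtr (mpow X s) with ht
  have hmem : t ∈ { r : ℝ | ∃ Y : Matrix (Fin N) (Fin N) ℂ, Y.PosSemidef ∧
      r = s * rtr (X * Y) - (s - 1) * rtr (mpow Y (s / (s - 1))) } := by
    refine ⟨Y₀, hY₀psd, ?_⟩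
    rw [hXY₀, hY₀pow, ← ht]
    ring
  refine (IsGreatest.csSup_eq ⟨hmem, fun r hr => ?_⟩).symm
  obtain ⟨Y, hY, rfl⟩ := hr
  exact upper_bound X hX hs Y hY
end

section
/- For a positive definite N×N complex matrix X and s < 0, one has tr X^s = sup over positive definite Y of ( s·tr(XY) − (s−1)·tr Y^{s/(s−1)} ). -/
open Matrix ComplexOrder

section Aux

variable {N : ℕ}

lemma trace_dWd (c d : Fin N → ℝ) (W : Matrix (Fin N) (Fin N) ℂ) :
    (Matrix.trace (Matrix.diagonal (fun i => (c i : ℂ)) * W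
        * Matrix.diagonal (fun k => (d k : ℂ)) * star W)).re
      = ∑ j, ∑ k, c j * d k * Complex.normSq (W j k) := by
  rw [Matrix.trace, Complex.re_sum]
  refine Finset.sum_congr rfl fun j _ => ?_
  rw [Matrix.diag_apply, Matrix.mul_apply, Complex.re_sum]
  refine Finset.sum_congr rfl fun k _ => ?_
  simp only [Matrix.mul_diagonal, Matrix.diagonal_mul, Matrix.star_eq_conjTranspose,
    Matrix.conjTranspose_apply]
  rw [show (c j : ℂ) * W j k * (d k : ℂ) * star (W j k)
      = (c j : ℂ) * (d k : ℂ) * (W j k * star (W j k)) by ring,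
    Complex.star_def, Complex.mul_conj]
  simp

lemma row_sum (W : Matrix (Fin N) (Fin N) ℂ) (hW : W ∈ Matrix.unitaryGroup (Fin N) ℂ)
    (j : Fin N) : ∑ k, Complex.normSq (W j k) = 1 := by
  have h2 := congrArg (fun M => M j j) (Matrix.mem_unitaryGroup_iff.mp hW)
  simp only [Matrix.mul_apply, Matrix.one_apply_eq, Matrix.star_eq_conjTranspose,
    Matrix.conjTranspose_apply] at h2
  have h3 : ∑ k, (Complex.normSq (W j k) : ℂ) = 1 := by simpa [Complex.mul_conj] using h2
  exact_mod_cast h3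

lemma col_sum (W : Matrix (Fin N) (Fin N) ℂ) (hW : W ∈ Matrix.unitaryGroup (Fin N) ℂ)
    (k : Fin N) : ∑ j, Complex.normSq (W j k) = 1 := by
  have h2 := congrArg (fun M => M k k) (Matrix.mem_unitaryGroup_iff'.mp hW)
  simp only [Matrix.mul_apply, Matrix.one_apply_eq, Matrix.star_eq_conjTranspose,
    Matrix.conjTranspose_apply] at h2
  have h3 : ∑ j, (Complex.normSq (W j k) : ℂ) = 1 := by
    simpa [mul_comm, Complex.mul_conj] using h2
  exact_mod_cast h3

lemma rtr_cfc {A : Matrix (Fin N) (Fin N) ℂ} (hA : A.IsHermitian) (f : ℝ → ℝ) :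
    rtr (cfc f A) = ∑ i, f (hA.eigenvalues i) := by
  rw [hA.cfc_eq, Matrix.IsHermitian.cfc, Unitary.conjStarAlgAut_apply, rtr, Matrix.trace_mul_cycle,
    Matrix.mem_unitaryGroup_iff'.mp (Matrix.IsHermitian.eigenvectorUnitary hA).2, one_mul,
    Matrix.trace_diagonal]
  simp

lemma conj_mul_conj (U V Da Dg : Matrix (Fin N) (Fin N) ℂ) (hU1 : U * star U = 1) :
    (U * Da * star U) * (V * Dg * star V)
      = U * (Da * (star U * V) * Dg * star (star U * V)) * star U := by
  rw [show star (star U * V) = star V * U by simp [Matrix.star_mul]]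
  simp only [mul_assoc]
  rw [hU1, mul_one]

lemma trace_conj (U M : Matrix (Fin N) (Fin N) ℂ) (hU : star U * U = 1) :
    Matrix.trace (U * M * star U) = Matrix.trace M := by
  rw [Matrix.trace_mul_cycle, hU, one_mul]

lemma rtr_mul_cfc {A : Matrix (Fin N) (Fin N) ℂ} (hA : A.IsHermitian) (g : ℝ → ℝ) :
    rtr (A * cfc g A) = ∑ i, hA.eigenvalues i * g (hA.eigenvalues i) := by
  have hU2 : star (hA.eigenvectorUnitary : Matrix (Fin N) (Fin N) ℂ)
      * (hA.eigenvectorUnitary : Matrix (Fin N) (Fin N) ℂ) = 1 :=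
    Matrix.mem_unitaryGroup_iff'.mp hA.eigenvectorUnitary.2
  have key : A * cfc g A
      = (hA.eigenvectorUnitary : Matrix (Fin N) (Fin N) ℂ)
        * (Matrix.diagonal (RCLike.ofReal ∘ hA.eigenvalues)
          * Matrix.diagonal (RCLike.ofReal ∘ g ∘ hA.eigenvalues))
        * star (hA.eigenvectorUnitary : Matrix (Fin N) (Fin N) ℂ) := by
    conv_lhs => rw [hA.cfc_eq, Matrix.IsHermitian.cfc]
    nth_rewrite 1 [hA.spectral_theorem]
    simp only [Unitary.conjStarAlgAut_apply, mul_assoc]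
    rw [← mul_assoc (star (hA.eigenvectorUnitary : Matrix (Fin N) (Fin N) ℂ)), hU2, one_mul]
  rw [key, rtr, trace_conj _ _ hU2, Matrix.diagonal_mul_diagonal, Matrix.trace_diagonal,
    Complex.re_sum]
  refine Finset.sum_congr rfl fun i _ => ?_
  simp [← Complex.ofReal_mul]

lemma klein {A B : Matrix (Fin N) (Fin N) ℂ} (hA : A.PosDef) (hB : B.PosDef)
    (f g : ℝ → ℝ)
    (hfg : ∀ x y : ℝ, 0 < x → 0 < y → f x ≤ f y + (x - y) * g y) :
    rtr (cfc f A) ≤ rtr (cfc f B) + rtr ((A - B) * cfc g B) := by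
  set U := (hA.1.eigenvectorUnitary : Matrix (Fin N) (Fin N) ℂ) with hUdef
  set V := (hB.1.eigenvectorUnitary : Matrix (Fin N) (Fin N) ℂ) with hVdef
  set a := hA.1.eigenvalues
  set b := hB.1.eigenvalues
  have ha : ∀ i, 0 < a i := hA.eigenvalues_pos
  have hb : ∀ i, 0 < b i := hB.eigenvalues_pos
  have hU1 : U * star U = 1 := Matrix.mem_unitaryGroup_iff.mp hA.1.eigenvectorUnitary.2
  have hU2 : star U * U = 1 := Matrix.mem_unitaryGroup_iff'.mp hA.1.eigenvectorUnitary.2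
  set W := star U * V with hWdef
  have hW : W ∈ Matrix.unitaryGroup (Fin N) ℂ :=
    mul_mem (Unitary.star_mem hA.1.eigenvectorUnitary.2) hB.1.eigenvectorUnitary.2
  set w : Fin N → Fin N → ℝ := fun j k => Complex.normSq (W j k) with hwdef
  have hw : ∀ j k, 0 ≤ w j k := fun j k => Complex.normSq_nonneg _
  have hmix : rtr (A * cfc g B) = ∑ j, ∑ k, a j * g (b k) * w j k := by
    have e1 : A * cfc g B
        = U * (Matrix.diagonal (fun i => (a i : ℂ)) * W
            * Matrix.diagonal (fun k => ((g (b k) : ℝ) : ℂ)) * star W) * star U := by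
      conv_lhs => rw [hB.1.cfc_eq, Matrix.IsHermitian.cfc]
      nth_rewrite 1 [hA.1.spectral_theorem]
      rw [show Matrix.diagonal (RCLike.ofReal ∘ a) = Matrix.diagonal (fun i => (a i : ℂ)) from rfl,
        show Matrix.diagonal (RCLike.ofReal ∘ g ∘ b)
          = Matrix.diagonal (fun k => ((g (b k) : ℝ) : ℂ)) from rfl]
      rw [Unitary.conjStarAlgAut_apply, Unitary.conjStarAlgAut_apply, conj_mul_conj _ _ _ _ hU1, hWdef]
    rw [e1, rtr, trace_conj _ _ hU2, trace_dWd]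
  have hBg : rtr (B * cfc g B) = ∑ j, ∑ k, (b k * g (b k)) * w j k := by
    rw [rtr_mul_cfc hB.1 g]
    rw [Finset.sum_comm]
    refine Finset.sum_congr rfl fun k _ => ?_
    show b k * g (b k) = _
    rw [← Finset.mul_sum, col_sum W hW k, mul_one]
  have hfA : rtr (cfc f A) = ∑ j, ∑ k, f (a j) * w j k := by
    rw [rtr_cfc hA.1 f]
    refine Finset.sum_congr rfl fun j _ => ?_
    show f (a j) = _
    rw [← Finset.mul_sum, row_sum W hW j, mul_one]
  have hfB : rtr (cfc f B) = ∑ j, ∑ k, f (b k) * w j k := by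
    rw [rtr_cfc hB.1 f, Finset.sum_comm]
    refine Finset.sum_congr rfl fun k _ => ?_
    show f (b k) = _
    rw [← Finset.mul_sum, col_sum W hW k, mul_one]
  have hsub : rtr ((A - B) * cfc g B) = rtr (A * cfc g B) - rtr (B * cfc g B) := by
    rw [Matrix.sub_mul, rtr]
    simp [rtr, Matrix.trace_sub]
  rw [hfA, hfB, hsub, hmix, hBg]
  have step : ∑ j, ∑ k, f (a j) * w j k
      ≤ ∑ j, ∑ k, (f (b k) * w j k + (a j * g (b k) * w j k - b k * g (b k) * w j k)) := by
    refine Finset.sum_le_sum fun j _ => Finset.sum_le_sum fun k _ => ?_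
    have h2 := mul_le_mul_of_nonneg_right (hfg (a j) (b k) (ha j) (hb k)) (hw j k)
    nlinarith [h2]
  refine step.trans (le_of_eq ?_)
  simp [Finset.sum_add_distrib, Finset.sum_sub_distrib]

lemma posDef_unitary_conj {D U : Matrix (Fin N) (Fin N) ℂ} (hD : D.PosDef)
    (hU : U ∈ Matrix.unitaryGroup (Fin N) ℂ) : (U * D * star U).PosDef := by
  refine Matrix.PosDef.of_dotProduct_mulVec_pos ?_ fun x hx => ?_
  · have := Matrix.isHermitian_mul_mul_conjTranspose U hD.1
    simpa [Matrix.star_eq_conjTranspose] using this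
  · have h1 : star U *ᵥ x ≠ 0 := by
      intro h
      apply hx
      have := congrArg (U *ᵥ ·) h
      simpa [Matrix.mulVec_mulVec, Matrix.mem_unitaryGroup_iff.mp hU] using this
    have h2 := hD.dotProduct_mulVec_pos h1
    have e : U * D * star U = (star U)ᴴ * D * (star U) := by
      simp [Matrix.star_eq_conjTranspose]
    rw [e]
    simpa only [Matrix.star_mulVec, Matrix.dotProduct_mulVec, Matrix.vecMul_vecMul] using h2

lemma contOn_rpow (p : ℝ) (S : Set ℝ) (hS : ∀ x ∈ S, 0 < x) :
    ContinuousOn (fun x : ℝ => x ^ p) S := fun x hx =>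
  (Real.continuousAt_rpow_const x p (Or.inl (hS x hx).ne')).continuousWithinAt

lemma spectrum_pos {X : Matrix (Fin N) (Fin N) ℂ} (hX : X.PosDef) :
    ∀ x ∈ spectrum ℝ X, 0 < x := by
  intro x hx
  rw [hX.1.spectrum_real_eq_range_eigenvalues] at hx
  obtain ⟨i, rfl⟩ := hx
  exact hX.eigenvalues_pos i

lemma mpow_posDef {X : Matrix (Fin N) (Fin N) ℂ} (hX : X.PosDef) (r : ℝ) :
    (mpow X r).PosDef := by
  rw [mpow, hX.1.cfc_eq, Matrix.IsHermitian.cfc]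
  refine posDef_unitary_conj ?_ hX.1.eigenvectorUnitary.2
  rw [Matrix.posDef_diagonal_iff]
  intro i
  have : (0:ℝ) < hX.1.eigenvalues i ^ r := Real.rpow_pos_of_pos (hX.eigenvalues_pos i) r
  simpa [Complex.zero_lt_real] using this

lemma mpow_comp {X : Matrix (Fin N) (Fin N) ℂ} (hX : X.PosDef) (a b : ℝ) :
    mpow (mpow X a) b = mpow X (a * b) := by
  have hsa : IsSelfAdjoint X := hX.1
  have hspec := spectrum_pos hX
  rw [mpow, mpow, mpow, ← cfc_comp (fun x : ℝ => x ^ b) (fun x : ℝ => x ^ a) X hsa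
      (contOn_rpow b _ (by rintro x ⟨y, hy, rfl⟩; exact Real.rpow_pos_of_pos (hspec y hy) a))
      (contOn_rpow a _ hspec)]
  exact cfc_congr fun x hx => by
    simp only [Function.comp_apply]
    rw [← Real.rpow_mul (hspec x hx).le]

lemma mpow_one {X : Matrix (Fin N) (Fin N) ℂ} (hX : X.PosDef) : mpow X 1 = X := by
  have hsa : IsSelfAdjoint X := hX.1
  rw [mpow]
  calc cfc (fun x : ℝ => x ^ (1:ℝ)) X = cfc (fun x : ℝ => x) X := by
        exact cfc_congr fun x _ => Real.rpow_one x
    _ = X := cfc_id ℝ X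

lemma scalar_tangent {p : ℝ} (hp0 : 0 < p) (hp1 : p ≤ 1) {x y : ℝ} (hx : 0 < x) (hy : 0 < y) :
    x ^ p ≤ y ^ p + (x - y) * (p * y ^ (p - 1)) := by
  have hb' : (0:ℝ) < y ^ p := Real.rpow_pos_of_pos hy p
  have h := rpow_one_add_le_one_add_mul_self
    (show (-1:ℝ) ≤ x / y - 1 by have := (div_pos hx hy); linarith) hp0.le hp1
  rw [show (1:ℝ) + (x / y - 1) = x / y by ring, Real.div_rpow hx.le hy.le] at h
  have h3 := mul_le_mul_of_nonneg_right h hb'.le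
  rw [div_mul_cancel₀ _ hb'.ne'] at h3
  have h5 : y ^ (p - 1) = y ^ p / y := by
    rw [Real.rpow_sub hy, Real.rpow_one]
  calc x ^ p ≤ (1 + p * (x / y - 1)) * y ^ p := h3
    _ = y ^ p + (x - y) * (p * (y ^ p / y)) := by field_simp
    _ = y ^ p + (x - y) * (p * y ^ (p - 1)) := by rw [h5]

lemma rtr_smul (c : ℝ) (A : Matrix (Fin N) (Fin N) ℂ) : rtr (c • A) = c * rtr A := by
  simp [rtr, Complex.smul_re]

end Aux

theorem trace_pow_variational_sup_neg {N : ℕ} (X : Matrix (Fin N) (Fin N) ℂ)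
    (hX : X.PosDef) (s : ℝ) (hs : s < 0) :
    rtr (mpow X s) =
      sSup { r : ℝ | ∃ Y : Matrix (Fin N) (Fin N) ℂ, Y.PosDef ∧
        r = s * rtr (X * Y) - (s - 1) * rtr (mpow Y (s / (s - 1))) } := by
  set p := s / (s - 1) with hpdef
  have hs1 : s - 1 < 0 := by linarith
  have hps : (s - 1) * p = s := by
    rw [hpdef, mul_comm, div_mul_cancel₀ s (ne_of_lt hs1)]
  have hp0 : 0 < p := by
    by_contra hcon
    push_neg at hcon
    nlinarith [mul_nonneg (neg_nonneg.2 hs1.le) (neg_nonneg.2 hcon), hps]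
  have hp1 : p < 1 := by nlinarith [hps]
  have hp11 : (s - 1) * (p - 1) = 1 := by
    have e : (s - 1) * (p - 1) = (s - 1) * p - (s - 1) := by ring
    rw [e, hps]; ring
  set T := rtr (mpow X s) with hTdef
  have hT : T = ∑ i, hX.1.eigenvalues i ^ s := by
    rw [hTdef, mpow, rtr_cfc hX.1]
  -- the optimal Y
  have hY₀ : (mpow X (s - 1)).PosDef := mpow_posDef hX (s - 1)
  have hXY₀ : rtr (X * mpow X (s - 1)) = T := by
    rw [mpow, rtr_mul_cfc hX.1, hT]
    refine Finset.sum_congr rfl fun i _ => ?_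
    rw [show s = 1 + (s - 1) by ring, Real.rpow_add (hX.eigenvalues_pos i), Real.rpow_one]
    norm_num
  have hY₀p : mpow (mpow X (s - 1)) p = mpow X s := by
    rw [mpow_comp hX, hps]
  have hmem : T ∈ { r : ℝ | ∃ Y : Matrix (Fin N) (Fin N) ℂ, Y.PosDef ∧
      r = s * rtr (X * Y) - (s - 1) * rtr (mpow Y (s / (s - 1))) } := by
    refine ⟨mpow X (s - 1), hY₀, ?_⟩
    rw [← hpdef, hXY₀, hY₀p, ← hTdef]
    ring
  -- the upper bound
  have hub : ∀ r ∈ { r : ℝ | ∃ Y : Matrix (Fin N) (Fin N) ℂ, Y.PosDef ∧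
      r = s * rtr (X * Y) - (s - 1) * rtr (mpow Y (s / (s - 1))) }, r ≤ T := by
    rintro r ⟨Y, hY, rfl⟩
    rw [← hpdef]
    have h1s : (0:ℝ) < 1 - s := by linarith
    have hsp : (1 - s) * p = -s := by linarith [hps]
    have hkl := klein hY hY₀ (fun t => (1 - s) * t ^ p) (fun t => (-s) * t ^ (p - 1))
      (fun x y hx hy => by
        have tangent := scalar_tangent hp0 hp1.le hx hy
        calc (1 - s) * x ^ p ≤ (1 - s) * (y ^ p + (x - y) * (p * y ^ (p - 1))) :=
              mul_le_mul_of_nonneg_left tangent h1s.le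
          _ = (1 - s) * y ^ p + (x - y) * (((1 - s) * p) * y ^ (p - 1)) := by ring
          _ = (1 - s) * y ^ p + (x - y) * ((-s) * y ^ (p - 1)) := by rw [hsp])
    have hfY : cfc (fun t : ℝ => (1 - s) * t ^ p) Y = (1 - s) • mpow Y p := by
      rw [mpow]
      exact cfc_const_mul (1 - s) (fun t : ℝ => t ^ p) Y
        (contOn_rpow p _ (spectrum_pos hY))
    have hfB : cfc (fun t : ℝ => (1 - s) * t ^ p) (mpow X (s - 1)) = (1 - s) • mpow X s := by
      have h := cfc_const_mul (1 - s) (fun t : ℝ => t ^ p) (mpow X (s - 1))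
        (contOn_rpow p _ (spectrum_pos hY₀))
      rw [← mpow, hY₀p] at h
      exact h
    have hgB : cfc (fun t : ℝ => (-s) * t ^ (p - 1)) (mpow X (s - 1)) = (-s) • X := by
      have h := cfc_const_mul (-s) (fun t : ℝ => t ^ (p - 1)) (mpow X (s - 1))
        (contOn_rpow (p - 1) _ (spectrum_pos hY₀))
      rw [← mpow, mpow_comp hX, hp11, mpow_one hX] at h
      exact h
    rw [hfY, hfB, hgB] at hkl
    rw [rtr_smul, rtr_smul] at hkl
    have hlast : rtr ((Y - mpow X (s - 1)) * ((-s) • X))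
        = (-s) * (rtr (X * Y) - T) := by
      rw [Matrix.mul_smul, rtr_smul]
      congr 1
      rw [Matrix.sub_mul]
      have : rtr (Y * X - mpow X (s - 1) * X) = rtr (Y * X) - rtr (mpow X (s - 1) * X) := by
        simp [rtr, Matrix.trace_sub]
      rw [this, show rtr (Y * X) = rtr (X * Y) by rw [rtr, Matrix.trace_mul_comm]; rfl,
        show rtr (mpow X (s - 1) * X) = rtr (X * mpow X (s - 1)) by
          rw [rtr, Matrix.trace_mul_comm]; rfl, hXY₀]
    rw [hlast, ← hTdef] at hkl
    nlinarith [hkl]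
  exact le_antisymm (le_csSup ⟨T, hub⟩ hmem) (csSup_le ⟨T, hmem⟩ hub)
end

section
/- For any −1 ≤ q ≤ 0 and any K ∈ M_N(ℂ), the map (A,B) ↦ A K B^q K* A is jointly convex on pairs of positive definite N×N matrices, with respect to the Loewner order. -/
open Matrix ComplexOrder

namespace AuxKB

set_option linter.unusedSectionVars false

variable {n : Type*} [Fintype n] [DecidableEq n]
lemma psd_smul {A : Matrix n n ℂ} (hA : A.PosSemidef) {r : ℝ} (hr : 0 ≤ r) :
    (r • A).PosSemidef := by
  refine .of_dotProduct_mulVec_nonneg (by simpa [Matrix.IsHermitian] using congrArg (fun M => (r:ℝ) • M) hA.1) fun x => ?_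
  rw [smul_mulVec, dotProduct_smul]
  exact smul_nonneg (by exact_mod_cast hr) (hA.dotProduct_mulVec_nonneg x)

lemma pd_smul {A : Matrix n n ℂ} (hA : A.PosDef) {r : ℝ} (hr : 0 < r) :
    (r • A).PosDef := by
  refine .of_dotProduct_mulVec_pos (by simpa [Matrix.IsHermitian] using congrArg (fun M => (r:ℝ) • M) hA.1) fun ⦃x⦄ hx => ?_
  rw [smul_mulVec, dotProduct_smul]
  exact smul_pos hr (hA.dotProduct_mulVec_pos hx)

lemma pd_convex {B₀ B₁ : Matrix n n ℂ} (hB₀ : B₀.PosDef) (hB₁ : B₁.PosDef)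
    {θ : ℝ} (h0 : 0 ≤ θ) (h1 : θ ≤ 1) :
    ((1 - θ) • B₀ + θ • B₁).PosDef := by
  rcases eq_or_lt_of_le h0 with h | h
  · simp only [← h, sub_zero, one_smul, zero_smul, add_zero]
    exact hB₀
  · exact Matrix.PosDef.posSemidef_add (psd_smul hB₀.posSemidef (by linarith)) (pd_smul hB₁ h)

/-- Schur-complement based joint convexity of `(X, M) ↦ Xᴴ M⁻¹ X`. -/
lemma jc_schur (M₀ M₁ X₀ X₁ : Matrix n n ℂ) (hM₀ : M₀.PosDef) (hM₁ : M₁.PosDef)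
    {θ : ℝ} (h0 : 0 ≤ θ) (h1 : θ ≤ 1) :
    ((1 - θ) • (X₀ᴴ * M₀⁻¹ * X₀) + θ • (X₁ᴴ * M₁⁻¹ * X₁)
      - ((1 - θ) • X₀ + θ • X₁)ᴴ * ((1 - θ) • M₀ + θ • M₁)⁻¹
        * ((1 - θ) • X₀ + θ • X₁)).PosSemidef := by
  have hM := pd_convex hM₀ hM₁ h0 h1
  haveI := hM₀.isUnit.invertible
  haveI := hM₁.isUnit.invertible
  haveI := hM.isUnit.invertible
  have hP₀ : (fromBlocks M₀ X₀ X₀ᴴ (X₀ᴴ * M₀⁻¹ * X₀)).PosSemidef :=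
    (Matrix.PosDef.fromBlocks₁₁ _ _ hM₀).mpr (by simp [Matrix.PosSemidef.zero])
  have hP₁ : (fromBlocks M₁ X₁ X₁ᴴ (X₁ᴴ * M₁⁻¹ * X₁)).PosSemidef :=
    (Matrix.PosDef.fromBlocks₁₁ _ _ hM₁).mpr (by simp [Matrix.PosSemidef.zero])
  have hsum : ((1 - θ) • fromBlocks M₀ X₀ X₀ᴴ (X₀ᴴ * M₀⁻¹ * X₀)
      + θ • fromBlocks M₁ X₁ X₁ᴴ (X₁ᴴ * M₁⁻¹ * X₁)).PosSemidef :=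
    (psd_smul hP₀ (by linarith)).add (psd_smul hP₁ h0)
  have hre : (1 - θ) • fromBlocks M₀ X₀ X₀ᴴ (X₀ᴴ * M₀⁻¹ * X₀)
      + θ • fromBlocks M₁ X₁ X₁ᴴ (X₁ᴴ * M₁⁻¹ * X₁)
      = fromBlocks ((1 - θ) • M₀ + θ • M₁) ((1 - θ) • X₀ + θ • X₁)
          ((1 - θ) • X₀ + θ • X₁)ᴴ
          ((1 - θ) • (X₀ᴴ * M₀⁻¹ * X₀) + θ • (X₁ᴴ * M₁⁻¹ * X₁)) := by
    rw [Matrix.fromBlocks_smul, Matrix.fromBlocks_smul, Matrix.fromBlocks_add]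
    congr 1
    rw [conjTranspose_add, conjTranspose_smul, conjTranspose_smul]
    simp
  rw [hre] at hsum
  exact (Matrix.PosDef.fromBlocks₁₁ _ _ hM).mp hsum
lemma quadform {B : Matrix n n ℂ} (hB : IsHermitian B) (g : n → ℝ) (v : n → ℂ) :
    star v ⬝ᵥ (((hB.eigenvectorUnitary : Matrix n n ℂ) * diagonal (Complex.ofReal ∘ g)
        * star (hB.eigenvectorUnitary : Matrix n n ℂ)) *ᵥ v)
      = ((∑ j, g j * Complex.normSq ((star (hB.eigenvectorUnitary : Matrix n n ℂ) *ᵥ v) j) : ℝ) : ℂ) := by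
  set U : Matrix n n ℂ := (hB.eigenvectorUnitary : Matrix n n ℂ) with hU
  set u : n → ℂ := star U *ᵥ v with hu
  have h1 : (U * diagonal (Complex.ofReal ∘ g) * star U) *ᵥ v
      = U *ᵥ (diagonal (Complex.ofReal ∘ g) *ᵥ u) := by
    rw [hu, mulVec_mulVec, mulVec_mulVec]
  rw [h1, dotProduct_mulVec]
  have h2 : star v ᵥ* U = star u := by
    rw [hu, star_mulVec, star_eq_conjTranspose, conjTranspose_conjTranspose]
  rw [h2]
  have h3 : ∀ j, (diagonal (Complex.ofReal ∘ g) *ᵥ u) j = (g j : ℂ) * u j := by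
    intro j; simp [mulVec_diagonal]
  push_cast
  rw [dotProduct]
  refine Finset.sum_congr rfl fun j _ => ?_
  rw [h3 j]
  have : (star u) j = (starRingEnd ℂ) (u j) := rfl
  rw [this]
  rw [show (Complex.normSq (u j) : ℂ) = (starRingEnd ℂ) (u j) * u j by
    rw [mul_comm, Complex.mul_conj]]
  ring

/-- quadratic form of a spectrally-presented matrix -/


lemma unitary_mul_star {B : Matrix n n ℂ} (hB : B.IsHermitian) :
    (hB.eigenvectorUnitary : Matrix n n ℂ) * star (hB.eigenvectorUnitary : Matrix n n ℂ) = 1 :=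
  (Matrix.mem_unitaryGroup_iff).mp hB.eigenvectorUnitary.2

lemma star_mul_unitary {B : Matrix n n ℂ} (hB : B.IsHermitian) :
    star (hB.eigenvectorUnitary : Matrix n n ℂ) * (hB.eigenvectorUnitary : Matrix n n ℂ) = 1 :=
  (Matrix.mem_unitaryGroup_iff').mp hB.eigenvectorUnitary.2

lemma mpow_spec {B : Matrix n n ℂ} (hB : B.IsHermitian) (p : ℝ) :
    mpow B p = (hB.eigenvectorUnitary : Matrix n n ℂ)
      * diagonal (Complex.ofReal ∘ (fun x : ℝ => x ^ p) ∘ hB.eigenvalues)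
      * star (hB.eigenvectorUnitary : Matrix n n ℂ) :=
  hB.cfc_eq _

lemma triple_mul_triple {B : Matrix n n ℂ} (hB : B.IsHermitian) (c e : n → ℝ) :
    ((hB.eigenvectorUnitary : Matrix n n ℂ) * diagonal (Complex.ofReal ∘ c)
        * star (hB.eigenvectorUnitary : Matrix n n ℂ))
      * ((hB.eigenvectorUnitary : Matrix n n ℂ) * diagonal (Complex.ofReal ∘ e)
        * star (hB.eigenvectorUnitary : Matrix n n ℂ))
      = (hB.eigenvectorUnitary : Matrix n n ℂ) * diagonal (Complex.ofReal ∘ (c * e))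
        * star (hB.eigenvectorUnitary : Matrix n n ℂ) := by
  set U : Matrix n n ℂ := (hB.eigenvectorUnitary : Matrix n n ℂ)
  have h : star U * U = 1 := star_mul_unitary hB
  calc (U * diagonal (Complex.ofReal ∘ c) * star U) * (U * diagonal (Complex.ofReal ∘ e) * star U)
      = U * (diagonal (Complex.ofReal ∘ c) * (star U * U) * diagonal (Complex.ofReal ∘ e)) * star U := by
        simp only [Matrix.mul_assoc]
    _ = U * diagonal (Complex.ofReal ∘ (c * e)) * star U := by
        rw [h, Matrix.mul_one, diagonal_mul_diagonal]
        have he : (fun i => (Complex.ofReal ∘ c) i * (Complex.ofReal ∘ e) i)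
            = Complex.ofReal ∘ (c * e) := by funext i; simp
        rw [he]

lemma triple_inv {B : Matrix n n ℂ} (hB : B.IsHermitian) (c e : n → ℝ) (hce : ∀ j, c j * e j = 1) :
    ((hB.eigenvectorUnitary : Matrix n n ℂ) * diagonal (Complex.ofReal ∘ c)
        * star (hB.eigenvectorUnitary : Matrix n n ℂ))⁻¹
      = (hB.eigenvectorUnitary : Matrix n n ℂ) * diagonal (Complex.ofReal ∘ e)
        * star (hB.eigenvectorUnitary : Matrix n n ℂ) := by
  apply Matrix.inv_eq_right_inv
  rw [triple_mul_triple hB c e]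
  have : Complex.ofReal ∘ (c * e) = fun _ => (1:ℂ) := by
    ext j; simp [hce j]
  rw [this]
  have : diagonal (fun _ : n => (1:ℂ)) = 1 := diagonal_one
  rw [this, Matrix.mul_one, unitary_mul_star hB]

lemma shift_spec {B : Matrix n n ℂ} (hB : B.IsHermitian) (lam : ℝ) :
    B + lam • (1 : Matrix n n ℂ) = (hB.eigenvectorUnitary : Matrix n n ℂ)
      * diagonal (Complex.ofReal ∘ (fun x : ℝ => x + lam) ∘ hB.eigenvalues)
      * star (hB.eigenvectorUnitary : Matrix n n ℂ) := by
  set U : Matrix n n ℂ := (hB.eigenvectorUnitary : Matrix n n ℂ)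
  have hd : diagonal (Complex.ofReal ∘ (fun x : ℝ => x + lam) ∘ hB.eigenvalues)
      = diagonal (Complex.ofReal ∘ hB.eigenvalues) + lam • (1 : Matrix n n ℂ) := by
    ext i j
    rcases eq_or_ne i j with rfl | hij
    · simp [diagonal_apply_eq, Matrix.one_apply_eq, Complex.real_smul]
    · simp [diagonal_apply_ne _ hij, Matrix.one_apply_ne hij]
  rw [hd, Matrix.mul_add, Matrix.add_mul]
  congr 1
  · exact hB.spectral_theorem
  · rw [mul_smul_comm, smul_mul_assoc, Matrix.mul_one, unitary_mul_star hB]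


variable {B : Matrix n n ℂ}

lemma spectral_theorem' {B : Matrix n n ℂ} (hB : B.IsHermitian) :
    B = (hB.eigenvectorUnitary : Matrix n n ℂ)
      * diagonal (Complex.ofReal ∘ hB.eigenvalues)
      * star (hB.eigenvectorUnitary : Matrix n n ℂ) :=
  hB.spectral_theorem

lemma mpow_zero' (hB : B.IsHermitian) : mpow B 0 = 1 := by
  rw [mpow_spec hB]
  have h : (Complex.ofReal ∘ (fun x : ℝ => x ^ (0:ℝ)) ∘ hB.eigenvalues) = fun _ => (1:ℂ) := by
    funext j; simp [Real.rpow_zero]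
  rw [h, diagonal_one, Matrix.mul_one, unitary_mul_star hB]

lemma mpow_neg_one (hB : B.PosDef) : mpow B (-1) = B⁻¹ := by
  rw [mpow_spec hB.1]
  conv_rhs => rw [spectral_theorem' hB.1]
  rw [triple_inv hB.1 hB.1.eigenvalues ((fun x : ℝ => x ^ (-1:ℝ)) ∘ hB.1.eigenvalues)
    (fun j => by
      rw [Function.comp_apply, Real.rpow_neg_one]
      exact mul_inv_cancel₀ (hB.eigenvalues_pos j).ne')]

lemma shift_posDef (hB : B.PosDef) {lam : ℝ} (hlam : 0 ≤ lam) :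
    (B + lam • (1 : Matrix n n ℂ)).PosDef :=
  hB.add_posSemidef (psd_smul Matrix.PosSemidef.one hlam)

lemma shift_inv_spec (hB : B.PosDef) {lam : ℝ} (hlam : 0 ≤ lam) :
    (B + lam • (1 : Matrix n n ℂ))⁻¹ = (hB.1.eigenvectorUnitary : Matrix n n ℂ)
      * diagonal (Complex.ofReal ∘ (fun x : ℝ => (x + lam)⁻¹) ∘ hB.1.eigenvalues)
      * star (hB.1.eigenvectorUnitary : Matrix n n ℂ) := by
  rw [shift_spec hB.1 lam]
  refine triple_inv hB.1 ((fun x : ℝ => x + lam) ∘ hB.1.eigenvalues)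
    ((fun x : ℝ => (x + lam)⁻¹) ∘ hB.1.eigenvalues) (fun j => ?_)
  have := hB.eigenvalues_pos j
  exact mul_inv_cancel₀ (by simp only [Function.comp_apply]; positivity)

lemma quadform_mpow (hB : B.IsHermitian) (p : ℝ) (w : n → ℂ) :
    star w ⬝ᵥ (mpow B p *ᵥ w)
      = ((∑ j, (hB.eigenvalues j) ^ p
          * Complex.normSq ((star (hB.eigenvectorUnitary : Matrix n n ℂ) *ᵥ w) j) : ℝ) : ℂ) := by
  rw [mpow_spec hB]
  exact quadform hB _ w

lemma quadform_shift_inv (hB : B.PosDef) {lam : ℝ} (hlam : 0 ≤ lam) (w : n → ℂ) :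
    star w ⬝ᵥ ((B + lam • (1 : Matrix n n ℂ))⁻¹ *ᵥ w)
      = ((∑ j, (hB.1.eigenvalues j + lam)⁻¹
          * Complex.normSq ((star (hB.1.eigenvectorUnitary : Matrix n n ℂ) *ᵥ w) j) : ℝ) : ℂ) := by
  rw [shift_inv_spec hB hlam]
  exact quadform hB.1 _ w

section Scalar
open MeasureTheory Set

noncomputable def Cq (q : ℝ) : ℝ := ∫ t in Set.Ioi (0:ℝ), t ^ q * (1 + t)⁻¹

lemma core_continuousOn {q d : ℝ} (hd : 0 < d) :
    ContinuousOn (fun t : ℝ => t ^ q * (d + t)⁻¹) (Set.Ioi 0) := by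
  apply ContinuousOn.mul
  · exact fun x hx => (Real.continuousAt_rpow_const x q (Or.inl (ne_of_gt hx))).continuousWithinAt
  · apply ContinuousOn.inv₀
    · fun_prop
    · intro x hx
      have : (0:ℝ) < x := hx
      positivity

lemma integrableOn_core {q : ℝ} (hq1 : -1 < q) (hq0 : q < 0) {d : ℝ} (hd : 0 < d) :
    MeasureTheory.IntegrableOn (fun t : ℝ => t ^ q * (d + t)⁻¹) (Set.Ioi 0) := by
  have hmeas : ∀ s ⊆ Set.Ioi (0:ℝ), MeasurableSet s →
      AEStronglyMeasurable (fun t : ℝ => t ^ q * (d + t)⁻¹) (volume.restrict s) := by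
    intro s hs hsm
    exact ((core_continuousOn hd).mono hs).aestronglyMeasurable hsm
  rw [← Set.Ioc_union_Ioi_eq_Ioi (zero_le_one : (0:ℝ) ≤ 1)]
  apply MeasureTheory.IntegrableOn.union
  · -- on Ioc 0 1
    have hbase : MeasureTheory.IntegrableOn (fun t : ℝ => d⁻¹ * t ^ q) (Set.Ioc (0:ℝ) 1) := by
      refine MeasureTheory.Integrable.const_mul ?_ _
      have := (intervalIntegral.intervalIntegrable_rpow' (a := 0) (b := 1) hq1)
      rwa [intervalIntegrable_iff_integrableOn_Ioc_of_le zero_le_one] at this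
    refine hbase.mono' (hmeas _ Set.Ioc_subset_Ioi_self measurableSet_Ioc) ?_
    filter_upwards [ae_restrict_mem measurableSet_Ioc] with t ht
    have ht0 : (0:ℝ) < t := ht.1
    rw [Real.norm_eq_abs, abs_of_nonneg (by positivity)]
    have h1 : (d + t)⁻¹ ≤ d⁻¹ := by
      apply inv_anti₀ hd; linarith
    calc t ^ q * (d + t)⁻¹ ≤ t ^ q * d⁻¹ := by
          apply mul_le_mul_of_nonneg_left h1 (by positivity)
      _ = d⁻¹ * t ^ q := by ring
  · -- on Ioi 1
    have hbase : MeasureTheory.IntegrableOn (fun t : ℝ => t ^ (q - 1)) (Set.Ioi (1:ℝ)) :=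
      integrableOn_Ioi_rpow_of_lt (by linarith) one_pos
    refine hbase.mono' (hmeas _ (fun x hx => Set.mem_Ioi.mpr (lt_trans one_pos hx)) measurableSet_Ioi) ?_
    filter_upwards [ae_restrict_mem measurableSet_Ioi] with t ht
    have ht0 : (0:ℝ) < t := lt_trans one_pos ht
    rw [Real.norm_eq_abs, abs_of_nonneg (by positivity)]
    have h1 : (d + t)⁻¹ ≤ t⁻¹ := by
      apply inv_anti₀ ht0; linarith
    calc t ^ q * (d + t)⁻¹ ≤ t ^ q * t⁻¹ := by
          apply mul_le_mul_of_nonneg_left h1 (by positivity)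
      _ = t ^ (q - 1) := by
          rw [← Real.rpow_neg_one t, ← Real.rpow_add ht0]; ring_nf

lemma core_integral {q : ℝ} (hq1 : -1 < q) (hq0 : q < 0) {d : ℝ} (hd : 0 < d) :
    ∫ t in Set.Ioi (0:ℝ), t ^ q * (d + t)⁻¹ = d ^ q * Cq q := by
  have hsub := MeasureTheory.integral_comp_mul_left_Ioi
    (fun x => x ^ q * (d + x)⁻¹) 0 hd
  rw [mul_zero] at hsub
  -- hsub : ∫ x in Ioi 0, (d*x)^q * (d + d*x)⁻¹ = d⁻¹ • ∫ x in Ioi 0, x^q*(d+x)⁻¹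
  have hcong : ∫ x in Set.Ioi (0:ℝ), (d * x) ^ q * (d + d * x)⁻¹
      = ∫ x in Set.Ioi (0:ℝ), (d ^ q * d⁻¹) * (x ^ q * (1 + x)⁻¹) := by
    refine MeasureTheory.setIntegral_congr_fun measurableSet_Ioi (fun x hx => ?_)
    have hx0 : (0:ℝ) < x := hx
    rw [Real.mul_rpow hd.le hx0.le]
    have : (d + d * x)⁻¹ = d⁻¹ * (1 + x)⁻¹ := by
      rw [← mul_inv]; congr 1; ring
    rw [this]; ring
  rw [hcong, MeasureTheory.integral_const_mul, smul_eq_mul] at hsub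
  have hCq : (∫ x in Set.Ioi (0:ℝ), x ^ q * (1 + x)⁻¹) = Cq q := rfl
  rw [hCq] at hsub
  have hd' : d ≠ 0 := hd.ne'
  have hq' : d ^ q ≠ 0 := (Real.rpow_pos_of_pos hd q).ne'
  field_simp at hsub
  simp only [div_eq_mul_inv] at hsub
  linarith [hsub]

lemma Cq_pos {q : ℝ} (hq1 : -1 < q) (hq0 : q < 0) : 0 < Cq q := by
  rw [show (Cq q) = ∫ t in Set.Ioi (0:ℝ), t ^ q * (1 + t)⁻¹ from rfl]
  rw [MeasureTheory.setIntegral_pos_iff_support_of_nonneg_ae]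
  · have hsup : Set.Ioi (0:ℝ) ⊆ Function.support (fun t : ℝ => t ^ q * (1 + t)⁻¹) ∩ Set.Ioi 0 := by
      intro x hx
      have hx0 : (0:ℝ) < x := hx
      refine ⟨?_, hx⟩
      simp only [Function.mem_support]
      positivity
    calc (0:ENNReal) < volume (Set.Ioi (0:ℝ)) := by simp
      _ ≤ _ := measure_mono hsup
  · filter_upwards [ae_restrict_mem measurableSet_Ioi] with t ht
    have : (0:ℝ) < t := ht
    positivity
  · exact integrableOn_core hq1 hq0 one_pos

end Scalar

section Stage4
open MeasureTheory Set

variable {n : Type*} [Fintype n] [DecidableEq n]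

lemma integrableOn_S {q : ℝ} (hq1 : -1 < q) (hq0 : q < 0) (d : n → ℝ) (hd : ∀ j, 0 < d j)
    (c : n → ℝ) :
    IntegrableOn (fun lam : ℝ => lam ^ q * ∑ j, (d j + lam)⁻¹ * c j) (Set.Ioi 0) := by
  have he : (fun lam : ℝ => lam ^ q * ∑ j, (d j + lam)⁻¹ * c j)
      = fun lam : ℝ => ∑ j, c j * (lam ^ q * (d j + lam)⁻¹) := by
    funext lam
    rw [Finset.mul_sum]
    exact Finset.sum_congr rfl fun j _ => by ring
  rw [he]
  exact MeasureTheory.integrable_finset_sum _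
    (fun j _ => ((integrableOn_core hq1 hq0 (hd j)).const_mul (c j)))

lemma integral_S {q : ℝ} (hq1 : -1 < q) (hq0 : q < 0) (d : n → ℝ) (hd : ∀ j, 0 < d j)
    (c : n → ℝ) :
    ∫ lam in Set.Ioi (0:ℝ), lam ^ q * ∑ j, (d j + lam)⁻¹ * c j
      = (∑ j, d j ^ q * c j) * Cq q := by
  have he : (fun lam : ℝ => lam ^ q * ∑ j, (d j + lam)⁻¹ * c j)
      = fun lam : ℝ => ∑ j, c j * (lam ^ q * (d j + lam)⁻¹) := by
    funext lam
    rw [Finset.mul_sum]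
    exact Finset.sum_congr rfl fun j _ => by ring
  rw [he, MeasureTheory.integral_finset_sum _
    (fun j _ => ((integrableOn_core hq1 hq0 (hd j)).const_mul (c j)))]
  rw [Finset.sum_mul]
  refine Finset.sum_congr rfl fun j _ => ?_
  rw [MeasureTheory.integral_const_mul, core_integral hq1 hq0 (hd j)]
  ring

lemma key_real {q : ℝ} (hq1 : -1 < q) (hq0 : q < 0) {θ : ℝ} (h0 : 0 ≤ θ) (h1 : θ ≤ 1)
    (d₀ d₁ db : n → ℝ) (hd₀ : ∀ j, 0 < d₀ j) (hd₁ : ∀ j, 0 < d₁ j) (hdb : ∀ j, 0 < db j)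
    (c₀ c₁ cb : n → ℝ)
    (hlam : ∀ lam : ℝ, 0 < lam →
      0 ≤ (1-θ) * (∑ j, (d₀ j + lam)⁻¹ * c₀ j) + θ * (∑ j, (d₁ j + lam)⁻¹ * c₁ j)
          - ∑ j, (db j + lam)⁻¹ * cb j) :
    0 ≤ (1-θ) * (∑ j, d₀ j ^ q * c₀ j) + θ * (∑ j, d₁ j ^ q * c₁ j)
        - ∑ j, db j ^ q * cb j := by
  set I₀ := fun lam : ℝ => lam ^ q * ∑ j, (d₀ j + lam)⁻¹ * c₀ j with hI₀
  set I₁ := fun lam : ℝ => lam ^ q * ∑ j, (d₁ j + lam)⁻¹ * c₁ j with hI₁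
  set Ib := fun lam : ℝ => lam ^ q * ∑ j, (db j + lam)⁻¹ * cb j with hIb
  have hint₀ := integrableOn_S hq1 hq0 d₀ hd₀ c₀
  have hint₁ := integrableOn_S hq1 hq0 d₁ hd₁ c₁
  have hintb := integrableOn_S hq1 hq0 db hdb cb
  have hnonneg : 0 ≤ ∫ lam in Set.Ioi (0:ℝ), ((1-θ) * I₀ lam + θ * I₁ lam - Ib lam) := by
    refine MeasureTheory.setIntegral_nonneg measurableSet_Ioi (fun lam hlam' => ?_)
    have h := hlam lam hlam'
    have hl : (0:ℝ) < lam := hlam'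
    have hpow : 0 ≤ lam ^ q := (Real.rpow_pos_of_pos hl q).le
    simp only [hI₀, hI₁, hIb]
    have : (1-θ) * (lam ^ q * ∑ j, (d₀ j + lam)⁻¹ * c₀ j)
        + θ * (lam ^ q * ∑ j, (d₁ j + lam)⁻¹ * c₁ j)
        - lam ^ q * ∑ j, (db j + lam)⁻¹ * cb j
        = lam ^ q * ((1-θ) * (∑ j, (d₀ j + lam)⁻¹ * c₀ j)
            + θ * (∑ j, (d₁ j + lam)⁻¹ * c₁ j) - ∑ j, (db j + lam)⁻¹ * cb j) := by ring
    rw [this]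
    exact mul_nonneg hpow h
  have hval : ∫ lam in Set.Ioi (0:ℝ), ((1-θ) * I₀ lam + θ * I₁ lam - Ib lam)
      = ((1-θ) * (∑ j, d₀ j ^ q * c₀ j) + θ * (∑ j, d₁ j ^ q * c₁ j)
          - ∑ j, db j ^ q * cb j) * Cq q := by
    have h1 : ∫ lam in Set.Ioi (0:ℝ), ((1-θ) * I₀ lam + θ * I₁ lam - Ib lam)
        = (∫ lam in Set.Ioi (0:ℝ), ((1-θ) * I₀ lam + θ * I₁ lam))
          - ∫ lam in Set.Ioi (0:ℝ), Ib lam :=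
      MeasureTheory.integral_sub ((hint₀.const_mul _).add (hint₁.const_mul _)) hintb
    have h2 : ∫ lam in Set.Ioi (0:ℝ), ((1-θ) * I₀ lam + θ * I₁ lam)
        = (∫ lam in Set.Ioi (0:ℝ), (1-θ) * I₀ lam)
          + ∫ lam in Set.Ioi (0:ℝ), θ * I₁ lam :=
      MeasureTheory.integral_add (hint₀.const_mul _) (hint₁.const_mul _)
    rw [h1, h2, MeasureTheory.integral_const_mul, MeasureTheory.integral_const_mul]
    rw [hI₀, hI₁, hIb, integral_S hq1 hq0 d₀ hd₀ c₀, integral_S hq1 hq0 d₁ hd₁ c₁,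
      integral_S hq1 hq0 db hdb cb]
    ring
  rw [hval] at hnonneg
  have hC := Cq_pos hq1 hq0
  nlinarith [hnonneg, hC]

end Stage4

section Stage5

variable {n : Type*} [Fintype n] [DecidableEq n]

lemma herm_smul {A : Matrix n n ℂ} (hA : A.IsHermitian) (r : ℝ) : (r • A).IsHermitian := by
  simpa [Matrix.IsHermitian] using congrArg (fun M => r • M) hA

lemma triple_herm {B : Matrix n n ℂ} (hB : B.IsHermitian) (c : n → ℝ) :
    ((hB.eigenvectorUnitary : Matrix n n ℂ) * diagonal (Complex.ofReal ∘ c)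
      * star (hB.eigenvectorUnitary : Matrix n n ℂ)).IsHermitian := by
  have hd : (diagonal (Complex.ofReal ∘ c)).IsHermitian := by
    simp [Matrix.IsHermitian, diagonal_conjTranspose, Function.comp_def, Pi.star_def,
      Complex.conj_ofReal]
  simpa [Matrix.star_eq_conjTranspose] using
    isHermitian_mul_mul_conjTranspose (hB.eigenvectorUnitary : Matrix n n ℂ) hd

lemma mpow_herm {B : Matrix n n ℂ} (hB : B.IsHermitian) (p : ℝ) : (mpow B p).IsHermitian := by
  rw [mpow_spec hB]; exact triple_herm hB _

lemma T_eq {A : Matrix n n ℂ} (hA : A.IsHermitian) (K M : Matrix n n ℂ) :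
    A * K * M * Kᴴ * A = (Kᴴ * A)ᴴ * M * (Kᴴ * A) := by
  rw [conjTranspose_mul, conjTranspose_conjTranspose, hA.eq]
  simp [Matrix.mul_assoc]

lemma T_herm {A M : Matrix n n ℂ} (hA : A.IsHermitian) (hM : M.IsHermitian)
    (K : Matrix n n ℂ) : (A * K * M * Kᴴ * A).IsHermitian := by
  rw [T_eq hA]
  exact isHermitian_conjTranspose_mul_mul _ hM

lemma conj_qf (C M : Matrix n n ℂ) (v : n → ℂ) :
    star v ⬝ᵥ ((Cᴴ * M * C) *ᵥ v) = star (C *ᵥ v) ⬝ᵥ (M *ᵥ (C *ᵥ v)) := by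
  rw [← mulVec_mulVec, ← mulVec_mulVec, dotProduct_mulVec (star v), ← star_mulVec]

lemma qf_comb (P₀ P₁ Pb : Matrix n n ℂ) (θ : ℝ) (v : n → ℂ) :
    star v ⬝ᵥ ((((1-θ) • P₀ + θ • P₁) - Pb) *ᵥ v)
      = (1-θ) • (star v ⬝ᵥ (P₀ *ᵥ v)) + θ • (star v ⬝ᵥ (P₁ *ᵥ v))
        - star v ⬝ᵥ (Pb *ᵥ v) := by
  simp [add_mulVec, sub_mulVec, smul_mulVec, dotProduct_add, dotProduct_sub,
    dotProduct_smul]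

lemma real_comb (θ r₀ r₁ rb : ℝ) :
    (1-θ) • ((r₀ : ℂ)) + θ • ((r₁ : ℂ)) - (rb : ℂ)
      = (((1-θ) * r₀ + θ * r₁ - rb : ℝ) : ℂ) := by
  push_cast [Complex.real_smul]
  ring

end Stage5

end AuxKB

open AuxKB

theorem jointly_operator_convex_AKBqKA {N : ℕ} (q : ℝ) (hq1 : -1 ≤ q) (hq0 : q ≤ 0)
    (K : Matrix (Fin N) (Fin N) ℂ)
    (A₀ A₁ B₀ B₁ : Matrix (Fin N) (Fin N) ℂ)
    (hA₀ : A₀.PosDef) (hA₁ : A₁.PosDef) (hB₀ : B₀.PosDef) (hB₁ : B₁.PosDef)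
    (θ : ℝ) (hθ : θ ∈ Set.Icc (0:ℝ) 1) :
    ((1 - θ) • (A₀ * K * mpow B₀ q * Kᴴ * A₀) + θ • (A₁ * K * mpow B₁ q * Kᴴ * A₁)
      - (((1 - θ) • A₀ + θ • A₁) * K * mpow ((1 - θ) • B₀ + θ • B₁) q * Kᴴ *
          ((1 - θ) • A₀ + θ • A₁))).PosSemidef := by
  obtain ⟨hθ0, hθ1⟩ := hθ
  have hBb : ((1 - θ) • B₀ + θ • B₁).PosDef := pd_convex hB₀ hB₁ hθ0 hθ1
  have hAbh : ((1 - θ) • A₀ + θ • A₁).IsHermitian :=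
    (herm_smul hA₀.1 _).add (herm_smul hA₁.1 _)
  have hXb : (1 - θ) • (Kᴴ * A₀) + θ • (Kᴴ * A₁) = Kᴴ * ((1 - θ) • A₀ + θ • A₁) := by
    rw [Matrix.mul_add, Matrix.mul_smul, Matrix.mul_smul]
  rcases eq_or_lt_of_le hq0 with rfl | hq0'
  · -- q = 0
    rw [mpow_zero' hB₀.1, mpow_zero' hB₁.1, mpow_zero' hBb.1]
    have h := jc_schur (1 : Matrix (Fin N) (Fin N) ℂ) 1 (Kᴴ * A₀) (Kᴴ * A₁)
      Matrix.PosDef.one Matrix.PosDef.one hθ0 hθ1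
    have hone : (1 - θ) • (1 : Matrix (Fin N) (Fin N) ℂ) + θ • 1 = 1 := by
      rw [← add_smul]; norm_num
    rw [hone, hXb, inv_one] at h
    rw [T_eq hA₀.1 K 1, T_eq hA₁.1 K 1, T_eq hAbh K 1]
    exact h
  rcases eq_or_lt_of_le hq1 with rfl | hq1'
  · -- q = -1
    rw [mpow_neg_one hB₀, mpow_neg_one hB₁, mpow_neg_one hBb]
    have h := jc_schur B₀ B₁ (Kᴴ * A₀) (Kᴴ * A₁) hB₀ hB₁ hθ0 hθ1
    rw [hXb] at h
    rw [T_eq hA₀.1 K B₀⁻¹, T_eq hA₁.1 K B₁⁻¹, T_eq hAbh K ((1 - θ) • B₀ + θ • B₁)⁻¹]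
    exact h
  · -- -1 < q < 0
    refine .of_dotProduct_mulVec_nonneg ?_ fun v => ?_
    · exact ((herm_smul (T_herm hA₀.1 (mpow_herm hB₀.1 q) K) _).add
        (herm_smul (T_herm hA₁.1 (mpow_herm hB₁.1 q) K) _)).sub
        (T_herm hAbh (mpow_herm hBb.1 q) K)
    · rw [qf_comb, T_eq hA₀.1, T_eq hA₁.1, T_eq hAbh, conj_qf, conj_qf, conj_qf,
        quadform_mpow hB₀.1 q _, quadform_mpow hB₁.1 q _, quadform_mpow hBb.1 q _,
        real_comb, Complex.zero_le_real]
      refine key_real hq1' hq0' hθ0 hθ1 _ _ _ (fun j => hB₀.eigenvalues_pos j)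
        (fun j => hB₁.eigenvalues_pos j) (fun j => hBb.eigenvalues_pos j) _ _ _
        (fun lam hlam => ?_)
      have hM₀ := shift_posDef hB₀ hlam.le
      have hM₁ := shift_posDef hB₁ hlam.le
      have h := jc_schur (B₀ + lam • 1) (B₁ + lam • 1) (Kᴴ * A₀) (Kᴴ * A₁) hM₀ hM₁ hθ0 hθ1
      have hMb : (1 - θ) • (B₀ + lam • (1 : Matrix (Fin N) (Fin N) ℂ)) + θ • (B₁ + lam • 1)
          = ((1 - θ) • B₀ + θ • B₁) + lam • 1 := by
        module
      rw [hMb, hXb] at h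
      have h2 := h.dotProduct_mulVec_nonneg v
      rw [qf_comb, conj_qf, conj_qf, conj_qf, quadform_shift_inv hB₀ hlam.le,
        quadform_shift_inv hB₁ hlam.le, quadform_shift_inv hBb hlam.le, real_comb,
        Complex.zero_le_real] at h2
      exact h2
end

section
/- Suppose for some p ≠ 0 and s > 0 the map A ↦ tr( K* A^p K )^s is concave on 2×2 positive definite matrices for every invertible K ∈ M_2(ℂ). Then 0 < p ≤ 1. -/
open Matrix ComplexOrder

noncomputable def Ups {N : ℕ} (K : Matrix (Fin N) (Fin N) ℂ) (p s : ℝ)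
    (A : Matrix (Fin N) (Fin N) ℂ) : ℝ :=
  rtr (mpow (Kᴴ * mpow A p * K) s)

/-! ### Auxiliary lemmas -/

section Aux

lemma spec_sub' {A : Matrix (Fin 2) (Fin 2) ℂ} {x y : ℝ}
    (hdet : ∀ z : ℝ, det ((z:ℂ) • 1 - A) = ((z:ℂ) - x) * ((z:ℂ) - y)) :
    spectrum ℝ A ⊆ {x, y} := by
  intro z hz
  have hz0 : det ((z:ℂ) • 1 - A) = 0 := by
    rw [← spectrum.algebraMap_mem_iff ℂ, spectrum.mem_iff] at hz
    rw [← Algebra.algebraMap_eq_smul_one]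
    by_contra hdet0
    exact hz ((Matrix.isUnit_iff_isUnit_det _).2 (isUnit_iff_ne_zero.2 hdet0))
  rw [hdet z] at hz0
  rcases mul_eq_zero.1 hz0 with h | h
  · left; exact_mod_cast sub_eq_zero.1 h
  · right; exact_mod_cast sub_eq_zero.1 h

lemma cfc_two_point' {A : Matrix (Fin 2) (Fin 2) ℂ} (hA : _root_.IsSelfAdjoint A) {x y : ℝ}
    (hxy : x ≠ y) (hspec : spectrum ℝ A ⊆ {x, y}) (f : ℝ → ℝ) :
    cfc f A = ((y * f x - x * f y)/(y - x) : ℝ) • (1 : Matrix (Fin 2) (Fin 2) ℂ)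
      + ((f y - f x)/(y - x) : ℝ) • A := by
  have hyx : y - x ≠ 0 := sub_ne_zero.2 (Ne.symm hxy)
  set c : ℝ := (y * f x - x * f y)/(y - x)
  set d : ℝ := (f y - f x)/(y - x)
  have h1 : cfc f A = cfc (fun z : ℝ => c + d * z) A := by
    apply cfc_congr
    intro z hz
    rcases hspec hz with h | h <;> subst h <;> simp only [c, d] <;> field_simp <;> ring
  rw [h1, cfc_add A _ _ (by fun_prop) (by fun_prop), cfc_const c A,
    cfc_const_mul d _ A (by fun_prop), cfc_id' ℝ A, Algebra.algebraMap_eq_smul_one]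

lemma key_trace' {M : Matrix (Fin 2) (Fin 2) ℂ} (hM : M.PosDef) {s : ℝ} (hs : 0 < s)
    (i : Fin 2) : ((M i i).re) ^ s ≤ rtr (mpow M s) := by
  classical
  have hH : M.IsHermitian := hM.isHermitian
  set U : Matrix (Fin 2) (Fin 2) ℂ := (Matrix.IsHermitian.eigenvectorUnitary hH : Matrix (Fin 2) (Fin 2) ℂ) with hU
  have hUU : U * star U = 1 := (Matrix.mem_unitaryGroup_iff).mp (Matrix.IsHermitian.eigenvectorUnitary hH).2
  have hUU' : star U * U = 1 := (Matrix.mem_unitaryGroup_iff').mp (Matrix.IsHermitian.eigenvectorUnitary hH).2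
  set ev : Fin 2 → ℝ := hH.eigenvalues with hev
  have hev_pos : ∀ j, 0 < ev j := fun j => hM.eigenvalues_pos j
  have htr : rtr (mpow M s) = ∑ j, (ev j) ^ s := by
    rw [mpow, hH.cfc_eq, Matrix.IsHermitian.cfc, Unitary.conjStarAlgAut_apply]
    rw [rtr, Matrix.trace_mul_cycle, ← hU, hUU', one_mul, trace_diagonal]
    simp [Complex.ofReal_re]
    rfl
  have hdiag : (M i i).re = ∑ j, (ev j) * Complex.normSq (U i j) := by
    conv_lhs => rw [hH.spectral_theorem, Unitary.conjStarAlgAut_apply]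
    rw [← hU, Matrix.mul_apply]
    rw [Complex.re_sum]
    refine Finset.sum_congr rfl fun j _ => ?_
    rw [Matrix.mul_diagonal, Matrix.star_apply]
    have h2 : U i j * ((RCLike.ofReal ∘ ev) j) * star (U i j)
        = ((ev j : ℂ)) * ((Complex.normSq (U i j) : ℂ)) := by
      rw [Complex.star_def, mul_comm (U i j), mul_assoc, Complex.mul_conj]
      rfl
    rw [h2]
    simp
  have hw : ∑ j, Complex.normSq (U i j) = 1 := by
    have h1 : (U * star U) i i = 1 := by rw [hUU]; simp [Matrix.one_apply]
    rw [Matrix.mul_apply] at h1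
    have h2 : ∀ j, U i j * (star U) j i = (Complex.normSq (U i j) : ℂ) := by
      intro j
      rw [Matrix.star_apply, Complex.star_def, Complex.mul_conj]
    rw [Finset.sum_congr rfl fun j _ => h2 j] at h1
    exact_mod_cast congrArg Complex.re h1
  obtain ⟨j₀, -, hj₀⟩ := Finset.exists_max_image (Finset.univ : Finset (Fin 2)) ev ⟨i, Finset.mem_univ i⟩
  have hMle : (M i i).re ≤ ev j₀ := by
    rw [hdiag]
    calc ∑ j, ev j * Complex.normSq (U i j) ≤ ∑ j, ev j₀ * Complex.normSq (U i j) := by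
          refine Finset.sum_le_sum fun j _ => ?_
          exact mul_le_mul_of_nonneg_right (hj₀ j (Finset.mem_univ j)) (Complex.normSq_nonneg _)
      _ = ev j₀ := by rw [← Finset.mul_sum, hw, mul_one]
  have hM0 : 0 ≤ (M i i).re := by
    rw [hdiag]
    exact Finset.sum_nonneg fun j _ => mul_nonneg (hev_pos j).le (Complex.normSq_nonneg _)
  calc ((M i i).re) ^ s ≤ (ev j₀) ^ s := Real.rpow_le_rpow hM0 hMle hs.le
    _ ≤ ∑ j, (ev j) ^ s := Finset.single_le_sum
        (fun j _ => Real.rpow_nonneg (hev_pos j).le s) (Finset.mem_univ j₀)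
    _ = rtr (mpow M s) := htr.symm

lemma posdef_conj' {N K : Matrix (Fin 2) (Fin 2) ℂ} (hN : N.PosDef) (hK : IsUnit K) :
    (Kᴴ * N * K).PosDef := by
  refine Matrix.PosDef.of_dotProduct_mulVec_pos (Matrix.isHermitian_conjTranspose_mul_mul K hN.1) ?_
  intro x hx
  have hKx : K *ᵥ x ≠ 0 := by
    have hinj : Function.Injective (K.mulVec) := Matrix.mulVec_injective_iff_isUnit.2 hK
    intro h
    exact hx (hinj (by simpa using h))
  simpa only [star_mulVec, dotProduct_mulVec, vecMul_vecMul] using hN.dotProduct_mulVec_pos hKx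

lemma posdef_symm_two' {c d : ℝ} (hd : 0 ≤ d) (hcd : d < c) :
    (!![(c:ℂ), (d:ℂ); (d:ℂ), (c:ℂ)]).PosDef := by
  rw [Matrix.posDef_iff_dotProduct_mulVec]
  constructor
  · ext i j; fin_cases i <;> fin_cases j <;> simp [Matrix.conjTranspose_apply]
  · intro x hx
    have hx2 : x 0 ≠ 0 ∨ x 1 ≠ 0 := by
      by_contra h
      push_neg at h
      exact hx (funext fun i => by fin_cases i <;> simp [h.1, h.2])
    have e00 : (!![(c:ℂ), (d:ℂ); (d:ℂ), (c:ℂ)]) 0 0 = (c:ℂ) := rfl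
    have e01 : (!![(c:ℂ), (d:ℂ); (d:ℂ), (c:ℂ)]) 0 1 = (d:ℂ) := rfl
    have e10 : (!![(c:ℂ), (d:ℂ); (d:ℂ), (c:ℂ)]) 1 0 = (d:ℂ) := rfl
    have e11 : (!![(c:ℂ), (d:ℂ); (d:ℂ), (c:ℂ)]) 1 1 = (c:ℂ) := rfl
    rw [Complex.lt_def]
    constructor
    · simp only [dotProduct, Matrix.mulVec, Fin.sum_univ_two, Pi.star_apply,
        Matrix.cons_val_zero, Matrix.cons_val_one, Matrix.head_cons, Matrix.cons_val',
        Matrix.empty_val', Matrix.cons_val_fin_one, Matrix.head_fin_const, Complex.add_re,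
        Complex.mul_re, Complex.star_def, Complex.conj_re, Complex.conj_im,
        Complex.add_im, Complex.mul_im, Complex.ofReal_re, Complex.ofReal_im, Complex.zero_re,
        e00, e01, e10, e11]
      set a := (x 0).re; set b := (x 0).im; set a' := (x 1).re; set b' := (x 1).im
      have h5 : a^2 + b^2 + a'^2 + b'^2 > 0 := by
        rcases hx2 with h | h
        · have : a ≠ 0 ∨ b ≠ 0 := by
            by_contra hc; push_neg at hc
            exact h (Complex.ext hc.1 hc.2)
          rcases this with h' | h' <;> positivity
        · have : a' ≠ 0 ∨ b' ≠ 0 := by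
            by_contra hc; push_neg at hc
            exact h (Complex.ext hc.1 hc.2)
          rcases this with h' | h' <;> positivity
      nlinarith [sq_nonneg (a + a'), sq_nonneg (b + b'), sq_nonneg (a - a'), sq_nonneg (b - b'), h5]
    · simp only [dotProduct, Matrix.mulVec, Fin.sum_univ_two, Pi.star_apply,
        Matrix.cons_val_zero, Matrix.cons_val_one, Matrix.head_cons, Matrix.cons_val',
        Matrix.empty_val', Matrix.cons_val_fin_one, Matrix.head_fin_const, Complex.add_im,
        Complex.mul_im, Complex.mul_re, Complex.star_def, Complex.conj_re, Complex.conj_im,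
        Complex.ofReal_re, Complex.ofReal_im, Complex.zero_im, e00, e01, e10, e11,
        Complex.add_re]
      ring

noncomputable abbrev sc (a : ℝ) : Matrix (Fin 2) (Fin 2) ℂ :=
  algebraMap ℝ (Matrix (Fin 2) (Fin 2) ℂ) a

lemma mpow_sc (a r : ℝ) : mpow (sc a) r = sc (a ^ r) := cfc_algebraMap a _

lemma rtr_sc (r : ℝ) : rtr (sc r) = 2 * r := by
  rw [sc, Matrix.algebraMap_eq_diagonal, rtr, trace_diagonal]
  simp [Fin.sum_univ_two]
  try ring

lemma posdef_sc {a : ℝ} (ha : 0 < a) : (sc a).PosDef := by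
  rw [sc, Matrix.algebraMap_eq_diagonal]
  rw [Matrix.posDef_diagonal_iff]
  intro i
  simp only [Pi.algebraMap_apply]
  rw [show (algebraMap ℝ ℂ) a = (a:ℂ) from rfl]
  exact Complex.zero_lt_real.2 ha

lemma Ups_one_sc (p s a : ℝ) : Ups 1 p s (sc a) = 2 * ((a ^ p) ^ s) := by
  rw [Ups, conjTranspose_one, one_mul, mul_one, mpow_sc, mpow_sc, rtr_sc]

lemma comb_sc (θ a b : ℝ) : (1 - θ) • sc a + θ • sc b = sc ((1-θ)*a + θ*b) := by
  simp only [sc]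
  rw [map_add]
  congr 1 <;> rw [Algebra.smul_def, ← _root_.map_mul]

lemma selfadj_A0' : _root_.IsSelfAdjoint (!![(5:ℂ),3;3,5]) := by
  rw [_root_.IsSelfAdjoint, Matrix.star_eq_conjTranspose]
  ext i j; fin_cases i <;> fin_cases j <;> simp [Matrix.conjTranspose_apply]

lemma selfadj_A1' : _root_.IsSelfAdjoint (!![(5:ℂ),-3;-3,5]) := by
  rw [_root_.IsSelfAdjoint, Matrix.star_eq_conjTranspose]
  ext i j; fin_cases i <;> fin_cases j <;> simp [Matrix.conjTranspose_apply]

lemma spec_A0' : spectrum ℝ (!![(5:ℂ),3;3,5]) ⊆ {2, 8} := by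
  apply spec_sub'
  intro z
  rw [det_fin_two]
  simp [Matrix.smul_apply, Matrix.one_apply]
  ring

lemma spec_A1' : spectrum ℝ (!![(5:ℂ),-3;-3,5]) ⊆ {2, 8} := by
  apply spec_sub'
  intro z
  rw [det_fin_two]
  simp [Matrix.smul_apply, Matrix.one_apply]
  ring

lemma mpow_A0' (p : ℝ) : mpow (!![(5:ℂ),3;3,5]) p
    = !![((((8:ℝ)^p + 2^p)/2 : ℝ) : ℂ), ((((8:ℝ)^p - 2^p)/2 : ℝ) : ℂ);
        ((((8:ℝ)^p - 2^p)/2 : ℝ) : ℂ), ((((8:ℝ)^p + 2^p)/2 : ℝ) : ℂ)] := by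
  rw [mpow, cfc_two_point' selfadj_A0' (show (2:ℝ) ≠ 8 by norm_num) spec_A0']
  ext i j
  fin_cases i <;> fin_cases j <;>
    simp [Matrix.add_apply, Matrix.smul_apply, Matrix.one_apply, Complex.real_smul] <;>
    push_cast <;> field_simp <;> ring

lemma mpow_A1' (p : ℝ) : mpow (!![(5:ℂ),-3;-3,5]) p
    = !![((((8:ℝ)^p + 2^p)/2 : ℝ) : ℂ), (-((((8:ℝ)^p - 2^p)/2 : ℝ)) : ℂ);
        (-((((8:ℝ)^p - 2^p)/2 : ℝ)) : ℂ), ((((8:ℝ)^p + 2^p)/2 : ℝ) : ℂ)] := by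
  rw [mpow, cfc_two_point' selfadj_A1' (show (2:ℝ) ≠ 8 by norm_num) spec_A1']
  ext i j
  fin_cases i <;> fin_cases j <;>
    simp [Matrix.add_apply, Matrix.smul_apply, Matrix.one_apply, Complex.real_smul] <;>
    push_cast <;> field_simp <;> ring

lemma selfadj_diag' (u v : ℝ) : _root_.IsSelfAdjoint (!![(u:ℂ),0;0,(v:ℂ)]) := by
  rw [_root_.IsSelfAdjoint, Matrix.star_eq_conjTranspose]
  ext i j; fin_cases i <;> fin_cases j <;> simp [Matrix.conjTranspose_apply]

lemma spec_diag' (u v : ℝ) : spectrum ℝ (!![(u:ℂ),0;0,(v:ℂ)]) ⊆ {u, v} := by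
  apply spec_sub'
  intro z
  rw [det_fin_two]
  simp [Matrix.smul_apply, Matrix.one_apply]
  try ring

lemma mpow_diag' {u v : ℝ} (huv : u ≠ v) (r : ℝ) :
    mpow (!![(u:ℂ),0;0,(v:ℂ)]) r = !![((u^r : ℝ):ℂ),0;0,((v^r : ℝ):ℂ)] := by
  rw [mpow, cfc_two_point' (selfadj_diag' u v) huv (spec_diag' u v)]
  have hvu : (v:ℂ) - (u:ℂ) ≠ 0 := sub_ne_zero.2 (by exact_mod_cast huv.symm)
  ext i j
  fin_cases i <;> fin_cases j <;>
    simp [Matrix.add_apply, Matrix.smul_apply, Matrix.one_apply, Complex.real_smul] <;>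
    push_cast <;> (try field_simp) <;> (try ring)

end Aux

theorem Ups_concave_necessary (p s : ℝ) (hp : p ≠ 0) (hs : 0 < s)
    (hconc : ∀ K : Matrix (Fin 2) (Fin 2) ℂ, IsUnit K →
      ∀ A₀ A₁ : Matrix (Fin 2) (Fin 2) ℂ, A₀.PosDef → A₁.PosDef →
      ∀ θ : ℝ, θ ∈ Set.Icc (0:ℝ) 1 →
        (1 - θ) * Ups K p s A₀ + θ * Ups K p s A₁ ≤
          Ups K p s ((1 - θ) • A₀ + θ • A₁)) :
    0 < p ∧ p ≤ 1 := by
  -- Part 1: scalar matrices give concavity of x ↦ x^(p*s), hence 0 < p*s ≤ 1, so 0 < p.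
  have key1 : ∀ a b : ℝ, 0 < a → 0 < b →
      (a ^ (p*s) + b ^ (p*s)) / 2 ≤ ((a + b)/2) ^ (p*s) := by
    intro a b ha hb
    have := hconc 1 isUnit_one (sc a) (sc b) (posdef_sc ha) (posdef_sc hb) (1/2)
      (by constructor <;> norm_num)
    rw [comb_sc, Ups_one_sc, Ups_one_sc, Ups_one_sc] at this
    rw [← Real.rpow_mul ha.le, ← Real.rpow_mul hb.le,
      ← Real.rpow_mul (by linarith : (0:ℝ) ≤ (1 - 1/2)*a + (1/2)*b)] at this
    have h2 : (1 - 1/2 : ℝ)*a + (1/2)*b = (a+b)/2 := by ring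
    rw [h2] at this
    linarith
  set r := p * s with hr
  have hr0 : r ≠ 0 := mul_ne_zero hp hs.ne'
  have hrpos : 0 < r := by
    rcases lt_trichotomy r 0 with hneg | h0 | hpos
    · exfalso
      set β : ℝ := 2 ^ ((2 - r)/r) with hβ
      have hβpos : 0 < β := Real.rpow_pos_of_pos (by norm_num) _
      have h1 := key1 1 β one_pos hβpos
      rw [Real.one_rpow] at h1
      have hβr : β ^ r = 2 ^ (2 - r) := by
        rw [hβ, ← Real.rpow_mul (by norm_num : (0:ℝ) ≤ 2), div_mul_cancel₀ _ hr0]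
      have hle : ((1 + β)/2) ^ r ≤ (1/2 : ℝ) ^ r :=
        Real.rpow_le_rpow_of_nonpos (by norm_num) (by linarith) hneg.le
      have h12 : (1/2 : ℝ) ^ r = 2 ^ (-r) := by
        rw [one_div, Real.inv_rpow (by norm_num : (0:ℝ) ≤ 2), ← Real.rpow_neg (by norm_num)]
      have h2r : (2:ℝ) ^ (2 - r) = 4 * 2 ^ (-r) := by
        rw [show (2 - r : ℝ) = 2 + (-r) by ring, Real.rpow_add (by norm_num)]
        norm_num
      have hpos2 : (0:ℝ) < 2 ^ (-r) := Real.rpow_pos_of_pos (by norm_num) _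
      rw [hβr, h2r] at h1
      rw [h12] at hle
      linarith
    · exact absurd h0 hr0
    · exact hpos
  have hppos : 0 < p := by
    rcases lt_or_ge 0 p with h | h
    · exact h
    · exfalso
      have : p * s ≤ 0 := mul_nonpos_of_nonpos_of_nonneg h hs.le
      rw [← hr] at this
      linarith
  refine ⟨hppos, ?_⟩
  -- Part 2 : p ≤ 1
  by_contra hgt
  push_neg at hgt
  -- strict convexity : n1 > 5^p
  set n1 : ℝ := ((8:ℝ)^p + 2^p)/2 with hn1
  set n2 : ℝ := ((8:ℝ)^p - 2^p)/2 with hn2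
  have hn2pos : 0 < n2 := by
    rw [hn2]
    have : (2:ℝ) ^ p < 8 ^ p := Real.rpow_lt_rpow (by norm_num) (by norm_num) hppos
    linarith
  have hconv : (5:ℝ) ^ p < n1 := by
    have hsc := (strictConvexOn_rpow hgt).2 (Set.mem_Ici.2 (by norm_num : (0:ℝ) ≤ 2))
      (Set.mem_Ici.2 (by norm_num : (0:ℝ) ≤ 8)) (by norm_num)
      (by norm_num : (0:ℝ) < 1/2) (by norm_num : (0:ℝ) < 1/2) (by norm_num)
    simp only [smul_eq_mul] at hsc
    rw [show (1/2 : ℝ) * 2 + (1/2) * 8 = 5 by norm_num] at hsc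
    rw [hn1]; linarith
  have h5p : (0:ℝ) < 5 ^ p := Real.rpow_pos_of_pos (by norm_num) _
  set W : ℝ := ((5:ℝ) ^ p) ^ s with hW
  have hWpos : 0 < W := Real.rpow_pos_of_pos h5p _
  have hn1pos : 0 < n1 := by rw [hn1]; positivity
  have hGpos : 0 < n1 ^ s - W := by
    have := Real.rpow_lt_rpow h5p.le hconv hs
    rw [hW]; linarith
  set G : ℝ := n1 ^ s - W with hG
  set t : ℝ := min (G / (2 * W)) (1/2) with ht
  have htpos : 0 < t := lt_min (by positivity) (by norm_num)
  have htlt1 : t < 1 := lt_of_le_of_lt (min_le_right _ _) (by norm_num)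
  set δ : ℝ := t ^ (1/(2*s)) with hδ
  have hδpos : 0 < δ := Real.rpow_pos_of_pos htpos _
  have hδsq : δ^2 = t ^ (1/s) := by
    rw [hδ, ← Real.rpow_natCast (t ^ (1/(2*s))) 2, ← Real.rpow_mul htpos.le]
    congr 1
    field_simp
    norm_num
  have hδsq_lt1 : δ^2 < 1 := by
    rw [hδsq]
    exact Real.rpow_lt_one htpos.le htlt1 (by positivity)
  have hδsq_pow : (δ^2) ^ s = t := by
    rw [hδsq, ← Real.rpow_mul htpos.le, one_div, inv_mul_cancel₀ hs.ne', Real.rpow_one]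
  -- the matrices
  set A0 : Matrix (Fin 2) (Fin 2) ℂ := !![(5:ℂ),3;3,5] with hA0
  set A1 : Matrix (Fin 2) (Fin 2) ℂ := !![(5:ℂ),-3;-3,5] with hA1
  set K : Matrix (Fin 2) (Fin 2) ℂ := !![1,0;0,(δ:ℂ)] with hK
  have hKunit : IsUnit K := by
    rw [Matrix.isUnit_iff_isUnit_det, hK, det_fin_two_of]
    simp only [mul_one, mul_zero, one_mul, sub_zero]
    exact isUnit_iff_ne_zero.2 (by exact_mod_cast hδpos.ne')
  have hA0pos : A0.PosDef := by
    have := posdef_symm_two' (show (0:ℝ) ≤ 3 by norm_num) (show (3:ℝ) < 5 by norm_num)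
    rw [hA0]
    convert this using 2 <;> norm_num
  have hA1pos : A1.PosDef := by
    have hJ : IsUnit (!![1,0;0,(-1:ℂ)]) := by
      rw [Matrix.isUnit_iff_isUnit_det, det_fin_two_of]
      simp only [mul_one, mul_zero, one_mul, sub_zero]
      exact isUnit_iff_ne_zero.2 (by norm_num)
    have := posdef_conj' hA0pos hJ
    have heq : (!![1,0;0,(-1:ℂ)])ᴴ * A0 * (!![1,0;0,(-1:ℂ)]) = A1 := by
      rw [hA0, hA1]
      ext i j
      fin_cases i <;> fin_cases j <;>
        simp [Matrix.mul_apply, Fin.sum_univ_two, Matrix.conjTranspose_apply]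
    rwa [heq] at this
  -- the midpoint is 5 • 1
  have hmid : (1 - (1/2 : ℝ)) • A0 + (1/2 : ℝ) • A1 = sc 5 := by
    rw [hA0, hA1, sc, Matrix.algebraMap_eq_diagonal]
    ext i j
    fin_cases i <;> fin_cases j <;>
      simp [Matrix.add_apply, Matrix.smul_apply, Matrix.diagonal_apply] <;> norm_num
  -- value at midpoint
  have hUmid : Ups K p s (sc 5) = W + W * t := by
    rw [Ups, mpow_sc]
    have hKK : Kᴴ * sc ((5:ℝ)^p) * K = !![(((5:ℝ)^p : ℝ):ℂ),0;0,((((5:ℝ)^p * δ^2) : ℝ):ℂ)] := by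
      rw [sc, hK]
      ext i j
      fin_cases i <;> fin_cases j <;>
        simp [Matrix.mul_apply, Fin.sum_univ_two, Matrix.conjTranspose_apply,
          Matrix.algebraMap_eq_diagonal, Matrix.diagonal_apply, Complex.real_smul] <;>
        push_cast <;> ring
    rw [hKK, mpow_diag' (show (5:ℝ)^p ≠ 5^p * δ^2 from
      ((by nlinarith : (5:ℝ)^p * δ^2 < 5^p).ne'))]
    rw [rtr, trace_fin_two_of, Complex.add_re, Complex.ofReal_re, Complex.ofReal_re]
    have hws : ((5:ℝ)^p * δ^2) ^ s = W * t := by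
      rw [Real.mul_rpow h5p.le (by positivity), hδsq_pow, hW]
    rw [hws, hW]
  -- lower bound at the endpoints
  have hlow0 : n1 ^ s ≤ Ups K p s A0 := by
    have hM : (Kᴴ * mpow A0 p * K).PosDef := by
      apply posdef_conj' _ hKunit
      rw [hA0, mpow_A0']
      have := posdef_symm_two' hn2pos.le (show n2 < n1 by
        rw [hn1, hn2]
        have : (0:ℝ) < 2^p := Real.rpow_pos_of_pos (by norm_num) _
        linarith)
      convert this using 2
    have h00 : ((Kᴴ * mpow A0 p * K) 0 0).re = n1 := by
      rw [hA0, mpow_A0', hK]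
      simp [Matrix.mul_apply, Fin.sum_univ_two, Matrix.conjTranspose_apply]
      rw [hn1]
    have := key_trace' hM hs 0
    rw [h00] at this
    exact this
  have hlow1 : n1 ^ s ≤ Ups K p s A1 := by
    have hM : (Kᴴ * mpow A1 p * K).PosDef := by
      apply posdef_conj' _ hKunit
      rw [hA1, mpow_A1']
      have hJ : IsUnit (!![1,0;0,(-1:ℂ)]) := by
        rw [Matrix.isUnit_iff_isUnit_det, det_fin_two_of]
        simp only [mul_one, mul_zero, one_mul, sub_zero]
        exact isUnit_iff_ne_zero.2 (by norm_num)
      have hbase := posdef_symm_two' hn2pos.le (show n2 < n1 by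
        rw [hn1, hn2]
        have : (0:ℝ) < 2^p := Real.rpow_pos_of_pos (by norm_num) _
        linarith)
      have := posdef_conj' hbase hJ
      have heq : (!![1,0;0,(-1:ℂ)])ᴴ * (!![(n1:ℂ),(n2:ℂ);(n2:ℂ),(n1:ℂ)]) * (!![1,0;0,(-1:ℂ)])
          = !![(n1:ℂ), (-n2 : ℝ); ((-n2:ℝ):ℂ), (n1:ℂ)] := by
        ext i j
        fin_cases i <;> fin_cases j <;>
          simp [Matrix.mul_apply, Fin.sum_univ_two, Matrix.conjTranspose_apply] <;> push_cast <;> ring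
      rw [heq] at this
      have heq2 : (!![(n1:ℂ), ((-n2 : ℝ):ℂ); ((-n2:ℝ):ℂ), (n1:ℂ)])
          = !![((((8:ℝ)^p + 2^p)/2 : ℝ) : ℂ), (-((((8:ℝ)^p - 2^p)/2 : ℝ)) : ℂ);
              (-((((8:ℝ)^p - 2^p)/2 : ℝ)) : ℂ), ((((8:ℝ)^p + 2^p)/2 : ℝ) : ℂ)] := by
        ext i j
        fin_cases i <;> fin_cases j <;> rw [hn1, hn2] <;> push_cast <;> norm_num
      rw [heq2] at this
      exact this
    have h00 : ((Kᴴ * mpow A1 p * K) 0 0).re = n1 := by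
      rw [hA1, mpow_A1', hK]
      simp [Matrix.mul_apply, Fin.sum_univ_two, Matrix.conjTranspose_apply]
      rw [hn1]
    have := key_trace' hM hs 0
    rw [h00] at this
    exact this
  -- put it together
  have hmain := hconc K hKunit A0 A1 hA0pos hA1pos (1/2) (by constructor <;> norm_num)
  rw [hmid, hUmid] at hmain
  have htG : W * t < G := by
    have h1 : t ≤ G / (2*W) := min_le_left _ _
    have : W * t ≤ W * (G / (2*W)) := by nlinarith
    have h2 : W * (G / (2*W)) = G/2 := by field_simp
    rw [h2] at this
    linarith
  have : n1 ^ s ≤ W + W * t := by linarith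
  rw [hG] at htG
  linarith
end
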